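/- arXiv:0904.0616 — 4 statements merged into one kernel-verified Lean document; each statement's English description precedes it below -/
import Mathlib

section
/- Let p, q be integers with p even and Δ = p² + 4q positive and not a perfect square, and set n = Δ/4 (an integer). Then the sum of the partial quotients over one least period of the continued fraction of frac(x₊(p,q)) satisfies Σ_{i=1}^{T(p,q)} a_i(frac(x₊(p,q))) ≤ 2·Σ_{u=1}^{⌊√n⌋} τ(n − u²) + τ(n). (Lemma 3, case of even p.) -/
open MeasureTheory Filter Set

/-- The Gauss map `y ↦ frac (1/y)`. -/
noncomputable def gaussMap : ℝ → ℝ := fun y => Int.fract (1 / y)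

/-- The `i`-th partial quotient of the continued fraction of `x` (for `i ≥ 1`):
`a_i(x) = ⌊1 / G^[i-1](x)⌋`. -/
noncomputable def cfDigit (i : ℕ) (x : ℝ) : ℤ := ⌊1 / (gaussMap^[i - 1] x)⌋

/-- The larger root `x₊(p,q) = (√(p² + 4q) − p)/2` of `x² + p x = q`. -/
noncomputable def xPlus (p q : ℤ) : ℝ := (Real.sqrt ((p : ℝ) ^ 2 + 4 * (q : ℝ)) - (p : ℝ)) / 2

/-- `Ω_R`: the integer points `(p,q)` with `p² + q² ≤ R²`, `p² + 4q > 0`,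
and `p² + 4q` not a perfect square. -/
def OmegaSet (R : ℝ) : Set (ℤ × ℤ) :=
  {pq | (pq.1 : ℝ) ^ 2 + (pq.2 : ℝ) ^ 2 ≤ R ^ 2 ∧ 0 < pq.1 ^ 2 + 4 * pq.2 ∧
    ¬ IsSquare (pq.1 ^ 2 + 4 * pq.2)}

/-- `P_i(k)`: the Lebesgue measure of `{x ∈ (0,1) : x irrational, a_i(x) = k}`. -/
noncomputable def gkProb (i : ℕ) (k : ℕ) : ℝ :=
  (volume {x : ℝ | x ∈ Set.Ioo (0 : ℝ) 1 ∧ Irrational x ∧ cfDigit i x = (k : ℤ)}).toReal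

/-- `T(p,q)`: the least period of the (purely periodic) sequence of partial quotients
of `frac (x₊(p,q))`. -/
noncomputable def period (p q : ℤ) : ℕ :=
  sInf {T : ℕ | 1 ≤ T ∧ ∀ i : ℕ, 1 ≤ i →
    cfDigit (i + T) (Int.fract (xPlus p q)) = cfDigit i (Int.fract (xPlus p q))}

/-- The sum `Σ_{i=1}^{T(p,q)} a_i(frac (x₊(p,q)))` of the partial quotients
over one least period. -/
noncomputable def periodSum (p q : ℤ) : ℤ :=
  ∑ i ∈ Finset.Icc 1 (period p q), cfDigit i (Int.fract (xPlus p q))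

namespace Arnold

structure Red (n : ℕ) (P Q : ℤ) : Prop where
  hQ : 0 < Q
  hdvd : Q ∣ (n : ℤ) - P ^ 2
  h1 : (P : ℝ) < Real.sqrt n
  h2 : Real.sqrt n < P + Q
  h3 : (Q : ℝ) < Real.sqrt n + P

noncomputable def dig (n : ℕ) (P Q : ℤ) : ℤ := ⌊(Real.sqrt n + P) / Q⌋
noncomputable def stP (n : ℕ) (P Q : ℤ) : ℤ := dig n P Q * Q - P
noncomputable def stQ (n : ℕ) (P Q : ℤ) : ℤ := ((n : ℤ) - stP n P Q ^ 2) / Q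

lemma Red.hP {n : ℕ} {P Q : ℤ} (h : Red n P Q) : 0 < P := by
  have h2 := h.h2; have h3 := h.h3
  have : (0:ℝ) < P := by nlinarith
  exact_mod_cast this

lemma Red.hQR {n : ℕ} {P Q : ℤ} (h : Red n P Q) : (0:ℝ) < Q := by exact_mod_cast h.hQ

lemma Red.one_le_dig {n : ℕ} {P Q : ℤ} (h : Red n P Q) : 1 ≤ dig n P Q := by
  have : (1:ℝ) ≤ (Real.sqrt n + P) / Q := le_of_lt ((one_lt_div h.hQR).2 h.h3)
  exact Int.le_floor.2 (by exact_mod_cast this)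

lemma step {n : ℕ} (hirr : Irrational (Real.sqrt n)) {P Q : ℤ} (h : Red n P Q) :
    Red n (stP n P Q) (stQ n P Q)
    ∧ Q * stQ n P Q = (n : ℤ) - stP n P Q ^ 2
    ∧ gaussMap ((Q : ℝ) / (Real.sqrt n + P)) = (stQ n P Q : ℝ) / (Real.sqrt n + stP n P Q) := by
  set s := Real.sqrt n with hs
  have hs2 : s ^ 2 = n := Real.sq_sqrt (by positivity)
  have hQR : (0:ℝ) < Q := h.hQR
  set a := dig n P Q with ha
  have ha1 : 1 ≤ a := h.one_le_dig
  have ha1R : (1:ℝ) ≤ a := by exact_mod_cast ha1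
  have hfl : (a:ℝ) ≤ (s + P)/Q := Int.floor_le _
  have hfu : (s + P)/Q < a + 1 := Int.lt_floor_add_one _
  have hne : (a:ℝ) ≠ (s + P)/Q := by
    intro hEq
    have : s = ((a * Q - P : ℤ) : ℝ) := by
      push_cast
      field_simp at hEq
      linarith
    exact hirr ⟨(a * Q - P : ℤ), this.symm⟩
  have hflt : (a:ℝ) < (s + P)/Q := lt_of_le_of_ne hfl hne
  have hmul1 : (a:ℝ) * Q < s + P := (lt_div_iff₀ hQR).1 hflt
  have hmul2 : s + P < ((a:ℝ) + 1) * Q := (div_lt_iff₀ hQR).1 hfu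
  set P' := stP n P Q with hP'
  have hP'R : (P' : ℝ) = a * Q - P := by rw [hP', stP]; push_cast; ring
  have hb1 : (P' : ℝ) < s := by rw [hP'R]; linarith
  have hb2 : s - Q < (P' : ℝ) := by rw [hP'R]; nlinarith
  have hb3 : -s < (P' : ℝ) := by
    have hP1 : (P : ℝ) < s := h.h1
    have h3 := h.h3
    nlinarith
  have hPsq : (P' : ℝ) ^ 2 < n := by nlinarith
  have hPsqZ : P' ^ 2 < (n : ℤ) := by exact_mod_cast hPsq
  have hdvd' : Q ∣ (n : ℤ) - P' ^ 2 := by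
    have hsum : P' + P = a * Q := by rw [hP', stP]; ring
    have h1 : (n : ℤ) - P' ^ 2 = ((n : ℤ) - P ^ 2) - (P' - P) * (a * Q) := by
      linear_combination (P - P') * hsum
    rw [h1]
    exact dvd_sub h.hdvd (Dvd.dvd.mul_left (dvd_mul_left Q a) _)
  set Q' := stQ n P Q with hQ'
  have hQQ' : Q * Q' = (n : ℤ) - P' ^ 2 := Int.mul_ediv_cancel' hdvd'
  have hQ'pos : 0 < Q' := by nlinarith [hQQ', h.hQ, hPsqZ]
  have hQ'R : (Q:ℝ) * Q' = (n:ℝ) - (P':ℝ)^2 := by exact_mod_cast hQQ'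
  have hq : (Q:ℝ) < s + P' := by
    have : (Q:ℝ) - P ≤ (P' : ℝ) := by rw [hP'R]; nlinarith
    have hP1 : (P : ℝ) < s := h.h1
    linarith
  have hnew2 : s < (P' : ℝ) + Q' := by nlinarith
  have hnew3 : (Q' : ℝ) < s + P' := by nlinarith
  refine ⟨⟨hQ'pos, ⟨Q, by rw [← hQQ']; ring⟩, hb1, hnew2, hnew3⟩, hQQ', ?_⟩
  have hPR : (0:ℝ) < P := by exact_mod_cast h.hP
  have hsP : (0:ℝ) < s + P := by nlinarith [Real.sqrt_nonneg (n:ℝ)]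
  have h1y : 1 / ((Q:ℝ) / (s + P)) = (s + P)/Q := one_div_div _ _
  show Int.fract (1 / ((Q:ℝ) / (s + P))) = _
  rw [h1y, Int.fract]
  have hfloor : ⌊(s + P)/(Q:ℝ)⌋ = a := rfl
  rw [hfloor]
  have hsP' : (0:ℝ) < s + P' := by linarith
  have hgoal : (s + (P:ℝ)) / Q - a = (s - P') / Q := by
    rw [hP'R]; field_simp; ring
  rw [hgoal, div_eq_div_iff (ne_of_gt hQR) (ne_of_gt hsP')]
  linear_combination hs2 - hQ'R

noncomputable def st (n : ℕ) : ℕ → ℤ × ℤ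
  | 0 => ((Nat.sqrt n : ℤ), (n : ℤ) - (Nat.sqrt n : ℤ) ^ 2)
  | i + 1 => (stP n (st n i).1 (st n i).2, stQ n (st n i).1 (st n i).2)

section
variable {n : ℕ} (hirr : Irrational (Real.sqrt n))

include hirr

lemma sqrt_bounds : ((Nat.sqrt n : ℤ) : ℝ) < Real.sqrt n ∧ Real.sqrt n < (Nat.sqrt n : ℤ) + 1 := by
  have hfl : ⌊Real.sqrt (n:ℝ)⌋ = (Nat.sqrt n : ℤ) := Real.floor_real_sqrt_eq_nat_sqrt
  constructor
  · rcases lt_or_eq_of_le (Int.floor_le (Real.sqrt (n:ℝ))) with h | h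
    · rw [hfl] at h; exact_mod_cast h
    · exact absurd ⟨(Nat.sqrt n : ℤ), by rw [← hfl]; exact h⟩ hirr
  · have := Int.lt_floor_add_one (Real.sqrt (n:ℝ))
    rw [hfl] at this; exact_mod_cast this

lemma red_base : Red n (st n 0).1 (st n 0).2 ∧
    Int.fract (Real.sqrt n) = ((st n 0).2 : ℝ) / (Real.sqrt n + (st n 0).1) := by
  obtain ⟨hl, hu⟩ := sqrt_bounds hirr
  set s := Real.sqrt n with hs
  set a : ℤ := (Nat.sqrt n : ℤ) with ha
  have hs2 : s ^ 2 = n := Real.sq_sqrt (by positivity)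
  have ha0 : (0:ℝ) ≤ a := by positivity
  have hQposR : (0:ℝ) < (n:ℝ) - (a:ℝ)^2 := by nlinarith
  have hQpos : 0 < (n:ℤ) - a^2 := by exact_mod_cast hQposR
  have hQ1 : (1:ℤ) ≤ (n:ℤ) - a^2 := hQpos
  have hQ1R : (1:ℝ) ≤ (n:ℝ) - (a:ℝ)^2 := by exact_mod_cast hQ1
  have hred : Red n a ((n:ℤ) - a^2) := by
    refine ⟨hQpos, dvd_refl _, hl, ?_, ?_⟩
    · push_cast; nlinarith
    · push_cast; nlinarith
  refine ⟨hred, ?_⟩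
  have hfr : Int.fract s = s - a := by
    rw [Int.fract, Real.floor_real_sqrt_eq_nat_sqrt]
  rw [hfr]
  simp only [st]
  have hsa : (0:ℝ) < s + a := by nlinarith
  rw [eq_div_iff (ne_of_gt hsa)]
  have hcast : ((((n:ℤ) - a^2) : ℤ) : ℝ) = (n:ℝ) - (a:ℝ)^2 := by push_cast; ring
  rw [hcast]
  linear_combination hs2

lemma orbit : ∀ i : ℕ, Red n (st n i).1 (st n i).2 ∧
    gaussMap^[i] (Int.fract (Real.sqrt n)) = ((st n i).2 : ℝ) / (Real.sqrt n + (st n i).1)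
  | 0 => ⟨(red_base hirr).1, (red_base hirr).2⟩
  | i + 1 => by
    obtain ⟨hred, heq⟩ := orbit i
    obtain ⟨hred', hmul, hg⟩ := step hirr hred
    refine ⟨hred', ?_⟩
    rw [Function.iterate_succ_apply', heq]
    exact hg

lemma digit_formula (i : ℕ) (hi : 1 ≤ i) :
    cfDigit i (Int.fract (Real.sqrt n)) = dig n (st n (i-1)).1 (st n (i-1)).2 := by
  obtain ⟨hred, heq⟩ := orbit hirr (i-1)
  rw [cfDigit, heq]
  have hsP : (0:ℝ) < Real.sqrt n + (st n (i-1)).1 := by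
    have := hred.h3; have := hred.hQR; linarith
  rw [one_div_div]
  rfl

end

section
variable {n : ℕ} (hirr : Irrational (Real.sqrt n))

/-- the deterministic step on states -/
noncomputable def step' (n : ℕ) (pq : ℤ × ℤ) : ℤ × ℤ := (stP n pq.1 pq.2, stQ n pq.1 pq.2)

lemma st_succ (i : ℕ) : st n (i + 1) = step' n (st n i) := rfl

include hirr

lemma step_injective {P₁ Q₁ P₂ Q₂ : ℤ} (h₁ : Red n P₁ Q₁) (h₂ : Red n P₂ Q₂)
    (hP : stP n P₁ Q₁ = stP n P₂ Q₂) (hQ : stQ n P₁ Q₁ = stQ n P₂ Q₂) :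
    P₁ = P₂ ∧ Q₁ = Q₂ := by
  obtain ⟨r₁, m₁, -⟩ := step hirr h₁
  obtain ⟨r₂, m₂, -⟩ := step hirr h₂
  have hQ'pos : 0 < stQ n P₂ Q₂ := r₂.hQ
  have hQeq : Q₁ = Q₂ := by
    rw [hP, hQ] at m₁
    exact mul_right_cancel₀ (ne_of_gt hQ'pos) (by linarith)
  subst hQeq
  have e1 : P₁ + stP n P₁ Q₁ = dig n P₁ Q₁ * Q₁ := by rw [stP]; ring
  have e2 : P₂ + stP n P₂ Q₁ = dig n P₂ Q₁ * Q₁ := by rw [stP]; ring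
  have hdvd : Q₁ ∣ P₁ - P₂ := by
    refine ⟨dig n P₁ Q₁ - dig n P₂ Q₁, ?_⟩
    rw [hP] at e1
    linear_combination e1 - e2
  have hr1 : ((P₁ - P₂ : ℤ) : ℝ) < (Q₁ : ℝ) := by
    have := h₁.h1; have := h₂.h2; push_cast; linarith
  have hr2 : -((Q₁ : ℝ)) < ((P₁ - P₂ : ℤ) : ℝ) := by
    have := h₂.h1; have := h₁.h2; push_cast; linarith
  have habs : |P₁ - P₂| < Q₁ := by
    rw [abs_lt]
    exact ⟨by exact_mod_cast hr2, by exact_mod_cast hr1⟩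
  refine ⟨?_, rfl⟩
  by_contra hne
  have h0 : P₁ - P₂ ≠ 0 := sub_ne_zero.2 hne
  have hle : Q₁ ≤ |P₁ - P₂| := Int.le_of_dvd (abs_pos.2 h0) ((dvd_abs _ _).2 hdvd)
  omega

lemma st_cancel (i j : ℕ) (h : st n (i + 1) = st n (j + 1)) : st n i = st n j := by
  have r₁ := (orbit hirr i).1
  have r₂ := (orbit hirr j).1
  have hP : stP n (st n i).1 (st n i).2 = stP n (st n j).1 (st n j).2 :=
    congrArg Prod.fst h
  have hQ : stQ n (st n i).1 (st n i).2 = stQ n (st n j).1 (st n j).2 :=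
    congrArg Prod.snd h
  obtain ⟨h1, h2⟩ := step_injective hirr r₁ r₂ hP hQ
  exact Prod.ext h1 h2

lemma st_zero_eq : ∀ i j : ℕ, st n i = st n (i + j) → st n 0 = st n j := by
  intro i
  induction i with
  | zero => intro j h; simpa using h
  | succ i ih =>
      intro j h
      apply ih
      exact st_cancel hirr i (i + j) (by rw [h]; congr 1; omega)

lemma exists_state_period : ∃ T : ℕ, 1 ≤ T ∧ st n 0 = st n T := by
  have hmaps : Set.MapsTo (st n) Set.univ
      (Set.Icc (1 : ℤ) (Nat.sqrt n) ×ˢ Set.Icc (1 : ℤ) (2 * Nat.sqrt n + 1)) := by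
    intro i _
    have hred := (orbit hirr i).1
    obtain ⟨hl, hu⟩ := sqrt_bounds hirr
    have hP1 : 1 ≤ (st n i).1 := hred.hP
    have hPle : (st n i).1 ≤ (Nat.sqrt n : ℤ) := by
      have : ((st n i).1 : ℝ) < (Nat.sqrt n : ℤ) + 1 := lt_trans hred.h1 hu
      have : (st n i).1 < (Nat.sqrt n : ℤ) + 1 := by exact_mod_cast this
      omega
    have hQ1 : 1 ≤ (st n i).2 := hred.hQ
    have hQle : (st n i).2 ≤ 2 * (Nat.sqrt n : ℤ) + 1 := by
      have h3 := hred.h3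
      have h1 := hred.h1
      have : ((st n i).2 : ℝ) < 2 * ((Nat.sqrt n : ℤ) : ℝ) + 2 := by linarith
      have : (st n i).2 < 2 * (Nat.sqrt n : ℤ) + 2 := by exact_mod_cast this
      omega
    exact ⟨⟨hP1, hPle⟩, ⟨hQ1, hQle⟩⟩
  obtain ⟨i, -, j, -, hne, heq⟩ :=
    Set.infinite_univ.exists_ne_map_eq_of_mapsTo hmaps
      ((Set.finite_Icc _ _).prod (Set.finite_Icc _ _))
  rcases lt_trichotomy i j with h | h | h
  · exact ⟨j - i, by omega, st_zero_eq hirr i (j - i) (by rw [heq]; congr 1; omega)⟩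
  · exact absurd h hne
  · exact ⟨i - j, by omega, st_zero_eq hirr j (i - j) (by rw [heq.symm]; congr 1; omega)⟩

lemma st_periodic {T : ℕ} (h : st n 0 = st n T) : ∀ k, st n (k + T) = st n k := by
  intro k
  induction k with
  | zero => simpa using h.symm
  | succ k ih => rw [show k + 1 + T = (k + T) + 1 by omega, st_succ, st_succ, ih]

end

/-- the set of digit-periods -/
def perSet (n : ℕ) : Set ℕ :=
  {T : ℕ | 1 ≤ T ∧ ∀ i : ℕ, 1 ≤ i →
    cfDigit (i + T) (Int.fract (Real.sqrt n)) = cfDigit i (Int.fract (Real.sqrt n))}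

noncomputable def TT (n : ℕ) : ℕ := sInf (perSet n)

section
variable {n : ℕ} (hirr : Irrational (Real.sqrt n))
include hirr

lemma digit_per_of_state {T : ℕ} (hT : 1 ≤ T) (h : st n 0 = st n T) : T ∈ perSet n := by
  refine ⟨hT, fun i hi => ?_⟩
  rw [digit_formula hirr (i + T) (by omega), digit_formula hirr i hi]
  have h1 : i + T - 1 = (i - 1) + T := by omega
  rw [h1, st_periodic hirr h (i - 1)]

lemma perSet_nonempty : (perSet n).Nonempty := by
  obtain ⟨T, hT, h⟩ := exists_state_period hirr
  exact ⟨T, digit_per_of_state hirr hT h⟩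

lemma TT_mem : TT n ∈ perSet n := Nat.sInf_mem (perSet_nonempty hirr)

lemma TT_pos : 1 ≤ TT n := (TT_mem hirr).1

lemma digit_iter : ∀ (k i : ℕ), 1 ≤ i →
    cfDigit (i + k * TT n) (Int.fract (Real.sqrt n)) = cfDigit i (Int.fract (Real.sqrt n)) := by
  intro k
  induction k with
  | zero => intro i hi; simp
  | succ k ih =>
      intro i hi
      have h1 : i + (k + 1) * TT n = (i + k * TT n) + TT n := by ring
      rw [h1, (TT_mem hirr).2 (i + k * TT n) (by omega), ih i hi]

omit hirr in
lemma st_forward {i j : ℕ} (h : st n i = st n j) : ∀ m, st n (i + m) = st n (j + m) := by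
  intro m
  induction m with
  | zero => simpa using h
  | succ m ih =>
      rw [show i + (m+1) = (i + m) + 1 by omega, show j + (m+1) = (j + m) + 1 by omega,
        st_succ, st_succ, ih]

lemma states_distinct {i j : ℕ} (hij : i < j) (hjT : j < TT n) : st n i ≠ st n j := by
  intro heq
  set T := TT n with hTdef
  have hT1 : 1 ≤ T := TT_pos hirr
  set d := j - i with hd
  have hd1 : 1 ≤ d := by omega
  have hdT : d < T := by omega
  have hdmem : d ∈ perSet n := by
    refine ⟨hd1, fun m hm => ?_⟩
    set k := i + 1 with hk
    have hkT : i + 1 ≤ k * T := by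
      calc i + 1 = k * 1 := by omega
      _ ≤ k * T := Nat.mul_le_mul_left k hT1
    have h1 := digit_iter hirr k m hm
    have h2 := digit_iter hirr k (m + d) (by omega)
    set r := m + k * T - (i + 1) with hr
    have hmk : m + k * T = i + 1 + r := by omega
    have h3 : cfDigit (i + 1 + r) (Int.fract (Real.sqrt n)) =
        cfDigit (j + 1 + r) (Int.fract (Real.sqrt n)) := by
      rw [digit_formula hirr (i + 1 + r) (by omega), digit_formula hirr (j + 1 + r) (by omega),
        show i + 1 + r - 1 = i + r by omega, show j + 1 + r - 1 = j + r by omega,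
        st_forward heq r]
    have hj1 : j + 1 + r = (m + d) + k * T := by omega
    rw [hmk] at h1
    rw [hj1] at h3
    rw [← h2, ← h3, h1]
  have hle : T ≤ d := Nat.sInf_le hdmem
  omega

end

section
variable {n : ℕ} (hirr : Irrational (Real.sqrt n))
include hirr

lemma dig_mul_lt {P Q : ℤ} (h : Red n P Q) :
    (dig n P Q : ℝ) * Q < Real.sqrt n + P := by
  set s := Real.sqrt n with hs
  have hQR : (0:ℝ) < Q := h.hQR
  have hfl : ((dig n P Q : ℤ) : ℝ) ≤ (s + P)/Q := Int.floor_le _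
  have hne : ((dig n P Q : ℤ) : ℝ) ≠ (s + P)/Q := by
    intro hEq
    have : s = ((dig n P Q * Q - P : ℤ) : ℝ) := by
      push_cast
      field_simp at hEq
      linarith
    exact hirr ⟨(dig n P Q * Q - P : ℤ), this.symm⟩
  have := lt_of_le_of_ne hfl hne
  calc (dig n P Q : ℝ) * Q < ((s + P)/Q) * Q := by
        exact mul_lt_mul_of_pos_right this hQR
  _ = s + P := by field_simp

theorem main_count (hn : ¬ IsSquare n) :
    (∑ i ∈ Finset.Icc 1 (TT n), cfDigit i (Int.fract (Real.sqrt n))) ≤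
      2 * (∑ u ∈ Finset.Icc 1 (Nat.sqrt n), ((n - u ^ 2).divisors.card : ℤ))
        + (n.divisors.card : ℤ) := by
  classical
  set s := Real.sqrt n with hsdef
  set T := TT n with hTdef
  set A : ℤ := (Nat.sqrt n : ℤ) with hA
  have hn2 : 2 ≤ n := by
    rcases n with _ | _ | n
    · exact absurd ⟨0, rfl⟩ hn
    · exact absurd ⟨1, rfl⟩ hn
    · omega
  have hA1 : 1 ≤ A := by
    have : 1 ≤ Nat.sqrt n := by
      have := Nat.sqrt_le_sqrt (show 1 ≤ n by omega)
      simpa using this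
    rw [hA]; exact_mod_cast this
  obtain ⟨hl, hu⟩ := sqrt_bounds hirr
  have hl' : (A : ℝ) < s := by rw [hA]; exact_mod_cast hl
  have hu' : s < (A : ℝ) + 1 := by rw [hA]; exact_mod_cast hu
  -- digit values
  have hdig : ∀ i, 1 ≤ i → cfDigit i (Int.fract s) = dig n (st n (i-1)).1 (st n (i-1)).2 :=
    fun i hi => digit_formula hirr i hi
  have hred : ∀ i : ℕ, Red n (st n i).1 (st n i).2 := fun i => (orbit hirr i).1
  -- the source finset
  set B : Finset ((_ : ℕ) × ℤ) :=
    (Finset.Icc 1 T).sigma (fun i => Finset.Icc (1:ℤ) (cfDigit i (Int.fract s))) with hB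
  -- target
  set D : ℤ → Finset ℤ :=
    fun u => (((n : ℤ) - u ^ 2).toNat.divisors.map ⟨Nat.cast, Nat.cast_injective⟩) with hD
  set C : Finset (ℤ × ℤ) :=
    (Finset.Icc (-A) A).biUnion (fun u => ({u} : Finset ℤ) ×ˢ D u) with hC
  -- sum = card B
  have hsum_card : (∑ i ∈ Finset.Icc 1 T, cfDigit i (Int.fract s)) = (B.card : ℤ) := by
    rw [hB, Finset.card_sigma, Nat.cast_sum]
    refine Finset.sum_congr rfl (fun i hi => ?_)
    have hi1 : 1 ≤ i := (Finset.mem_Icc.1 hi).1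
    have h1a : 1 ≤ cfDigit i (Int.fract s) := by
      rw [hdig i hi1]; exact (hred (i-1)).one_le_dig
    have h2 := Int.card_Icc_of_le (a := (1:ℤ)) (b := cfDigit i (Int.fract s)) (by omega)
    omega
  -- injection
  set f : ((_ : ℕ) × ℤ) → ℤ × ℤ :=
    fun z => (z.2 * (st n (z.1 - 1)).2 - (st n (z.1 - 1)).1, (st n (z.1 - 1)).2) with hf
  have hmaps : ∀ z ∈ B, f z ∈ C := by
    rintro ⟨i, k⟩ hz
    rw [hB, Finset.mem_sigma] at hz
    obtain ⟨hiT, hk⟩ := hz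
    rw [Finset.mem_Icc] at hiT hk
    set P := (st n (i-1)).1 with hP
    set Q := (st n (i-1)).2 with hQ
    have r := hred (i-1)
    have hk1 : 1 ≤ k := hk.1
    have hka : k ≤ dig n P Q := by
      have := hk.2; rwa [hdig i hiT.1] at this
    set u : ℤ := k * Q - P with hu
    -- bounds on u
    have hQ1 : 1 ≤ Q := r.hQ
    have hkQ : k * Q ≤ dig n P Q * Q := by
      exact mul_le_mul_of_nonneg_right hka (by omega)
    have hkQ1 : Q ≤ k * Q := by nlinarith
    have hdigR : (dig n P Q : ℝ) * Q < s + P := dig_mul_lt hirr r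
    have huR : (u : ℝ) < s := by
      have h1 : ((k * Q : ℤ) : ℝ) ≤ ((dig n P Q * Q : ℤ) : ℝ) := by exact_mod_cast hkQ
      rw [hu]
      push_cast at h1 ⊢
      linarith
    have hPA : P ≤ A := by
      have h1 : (P : ℝ) < (A : ℝ) + 1 := lt_trans r.h1 hu'
      have : P < A + 1 := by exact_mod_cast h1
      omega
    have huL : -s < (u : ℝ) := by
      have h1 : Q - P ≤ u := by omega
      have h2 : ((Q - P : ℤ) : ℝ) ≤ (u : ℝ) := by exact_mod_cast h1
      have h3 := r.h1
      have h4 : (1 : ℝ) ≤ (Q : ℝ) := by exact_mod_cast hQ1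
      push_cast at h2
      nlinarith [Real.sqrt_nonneg (n : ℝ)]
    have husq : u ^ 2 < (n : ℤ) := by
      have hs2 : s ^ 2 = (n : ℝ) := Real.sq_sqrt (by positivity)
      have : ((u : ℝ)) ^ 2 < (n : ℝ) := by nlinarith
      exact_mod_cast this
    have huA : u ≤ A := by
      have h1 : (u : ℝ) < (A : ℝ) + 1 := lt_trans huR hu'
      have : u < A + 1 := by exact_mod_cast h1
      omega
    have huA2 : -A ≤ u := by omega
    -- divisibility
    have hsumu : u + P = k * Q := by rw [hu]; ring
    have hdvdu : Q ∣ (n : ℤ) - u ^ 2 := by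
      have h1 : (n : ℤ) - u ^ 2 = ((n : ℤ) - P ^ 2) - (u - P) * (k * Q) := by
        linear_combination (P - u) * hsumu
      rw [h1]
      exact dvd_sub r.hdvd (Dvd.dvd.mul_left (dvd_mul_left Q k) _)
    -- membership
    rw [hC, Finset.mem_biUnion]
    refine ⟨u, Finset.mem_Icc.2 ⟨huA2, huA⟩, ?_⟩
    rw [Finset.mem_product]
    constructor
    · simp [hf]; rfl
    · rw [hD]
      simp only [Finset.mem_map, Function.Embedding.coeFn_mk]
      refine ⟨Q.toNat, ?_, by simp [Int.toNat_of_nonneg (by omega : (0:ℤ) ≤ Q)]; rfl⟩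
      rw [Nat.mem_divisors]
      constructor
      · have hcast : ((Q.toNat : ℤ)) = Q := Int.toNat_of_nonneg (by omega)
        have hcast2 : ((((n : ℤ) - u ^ 2).toNat : ℤ)) = (n : ℤ) - u ^ 2 :=
          Int.toNat_of_nonneg (by omega)
        rw [← Int.natCast_dvd_natCast, hcast, hcast2]
        exact hdvdu
      · omega
  have hinj : Set.InjOn f B := by
    rintro ⟨i, k⟩ hz1 ⟨j, l⟩ hz2 heq
    simp only [hB, Finset.coe_sigma, Set.mem_sigma_iff, Finset.mem_coe, Finset.mem_Icc] at hz1 hz2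
    obtain ⟨⟨hi1, hiT⟩, hk1, hk2⟩ := hz1
    obtain ⟨⟨hj1, hjT⟩, hl1, hl2⟩ := hz2
    have hQeq : (st n (i-1)).2 = (st n (j-1)).2 := by
      have := congrArg Prod.snd heq; simpa [hf] using this
    have hUeq : k * (st n (i-1)).2 - (st n (i-1)).1 = l * (st n (j-1)).2 - (st n (j-1)).1 := by
      have := congrArg Prod.fst heq; simpa [hf] using this
    set P₁ := (st n (i-1)).1
    set Q₁ := (st n (i-1)).2
    set P₂ := (st n (j-1)).1
    have r₁ := hred (i-1)
    have r₂ := hred (j-1)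
    rw [← hQeq] at hUeq r₂
    -- P₁ = P₂
    have hdvd : Q₁ ∣ P₁ - P₂ := ⟨k - l, by linear_combination -hUeq⟩
    have hr1 : ((P₁ - P₂ : ℤ) : ℝ) < (Q₁ : ℝ) := by
      have := r₁.h1; have := r₂.h2; push_cast; linarith
    have hr2 : -((Q₁ : ℝ)) < ((P₁ - P₂ : ℤ) : ℝ) := by
      have := r₂.h1; have := r₁.h2; push_cast; linarith
    have hPeq : P₁ = P₂ := by
      by_contra hne
      have h0 : P₁ - P₂ ≠ 0 := sub_ne_zero.2 hne
      have hle : Q₁ ≤ |P₁ - P₂| := Int.le_of_dvd (abs_pos.2 h0) ((dvd_abs _ _).2 hdvd)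
      have habs : |P₁ - P₂| < Q₁ := abs_lt.2 ⟨by exact_mod_cast hr2, by exact_mod_cast hr1⟩
      omega
    have hsteq : st n (i-1) = st n (j-1) := Prod.ext hPeq hQeq
    have hij : i = j := by
      by_contra hne
      rcases Nat.lt_or_ge i j with h | h
      · exact states_distinct hirr (show i-1 < j-1 by omega) (by omega) hsteq
      · have h' : j < i := by omega
        exact states_distinct hirr (show j-1 < i-1 by omega) (by omega) hsteq.symm
    subst hij
    have hkl : k = l := by
      have hQpos := r₁.hQ
      have hmul : k * Q₁ = l * Q₁ := by linarith [hUeq, hPeq]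
      exact mul_right_cancel₀ (by omega : Q₁ ≠ 0) hmul
    rw [hkl]
  have hcard : B.card ≤ C.card := Finset.card_le_card_of_injOn f hmaps hinj
  -- compute card C
  have hdisj : ∀ u ∈ Finset.Icc (-A) A, ∀ v ∈ Finset.Icc (-A) A, u ≠ v →
      Disjoint (({u} : Finset ℤ) ×ˢ D u) (({v} : Finset ℤ) ×ˢ D v) := by
    intro u _ v _ huv
    rw [Finset.disjoint_left]
    rintro ⟨a, b⟩ h1 h2
    rw [Finset.mem_product, Finset.mem_singleton] at h1 h2
    exact huv (h1.1 ▸ h2.1 ▸ rfl)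
  have hcardC : C.card = ∑ u ∈ Finset.Icc (-A) A, (((n : ℤ) - u ^ 2).toNat.divisors.card) := by
    rw [hC, Finset.card_biUnion hdisj]
    refine Finset.sum_congr rfl (fun u _ => ?_)
    rw [Finset.card_product, Finset.card_singleton, one_mul, hD, Finset.card_map]
  -- split the sum
  set g : ℤ → ℕ := fun u => ((n : ℤ) - u ^ 2).toNat.divisors.card with hg
  have hgneg : ∀ u : ℤ, g (-u) = g u := by intro u; simp [hg]
  have hdecomp : Finset.Icc (-A) A = (Finset.Icc (-A) (-1) ∪ {0}) ∪ Finset.Icc 1 A := by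
    ext z
    simp only [Finset.mem_Icc, Finset.mem_union, Finset.mem_singleton]
    omega
  have hdis1 : Disjoint (Finset.Icc (-A) (-1) ∪ {0} : Finset ℤ) (Finset.Icc 1 A) := by
    rw [Finset.disjoint_left]
    intro z hz hz2
    simp only [Finset.mem_union, Finset.mem_Icc, Finset.mem_singleton] at hz
    rw [Finset.mem_Icc] at hz2
    omega
  have hdis2 : Disjoint (Finset.Icc (-A) (-1) : Finset ℤ) ({0} : Finset ℤ) := by
    rw [Finset.disjoint_left]
    intro z hz hz2
    rw [Finset.mem_Icc] at hz
    rw [Finset.mem_singleton] at hz2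
    omega
  have hneg : ∑ u ∈ Finset.Icc (-A) (-1), g u = ∑ u ∈ Finset.Icc (1:ℤ) A, g u := by
    refine Finset.sum_nbij' (fun u => -u) (fun u => -u) ?_ ?_ ?_ ?_ ?_
    · intro a ha; rw [Finset.mem_Icc] at ha ⊢; omega
    · intro a ha; rw [Finset.mem_Icc] at ha ⊢; omega
    · intro a _; ring
    · intro a _; ring
    · intro a _; exact (hgneg a).symm
  have hg0 : g 0 = n.divisors.card := by simp [hg]
  have hnat : ∑ u ∈ Finset.Icc (1:ℤ) A, g u
      = ∑ u ∈ Finset.Icc 1 (Nat.sqrt n), (n - u ^ 2).divisors.card := by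
    refine Finset.sum_nbij' (fun u => u.toNat) (fun v => (v : ℤ)) ?_ ?_ ?_ ?_ ?_
    · intro a ha
      rw [Finset.mem_Icc] at ha ⊢
      rw [hA] at ha
      omega
    · intro a ha
      rw [Finset.mem_Icc] at ha ⊢
      rw [hA]
      omega
    · intro a ha; rw [Finset.mem_Icc] at ha; omega
    · intro a _; simp
    · intro a ha
      rw [Finset.mem_Icc] at ha
      have h1 : ((a.toNat : ℤ)) = a := Int.toNat_of_nonneg (by omega)
      show ((n : ℤ) - a ^ 2).toNat.divisors.card = (n - a.toNat ^ 2).divisors.card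
      have h3 : ((n : ℤ) - a ^ 2).toNat = n - a.toNat ^ 2 := by
        rw [← h1]
        rw [show ((n : ℤ) - ((a.toNat : ℤ)) ^ 2) = ((n : ℤ) - ((a.toNat ^ 2 : ℕ) : ℤ)) by
          push_cast; ring]
        exact Int.toNat_sub _ _
      rw [h3]
  have hfinal : C.card
      = 2 * (∑ u ∈ Finset.Icc 1 (Nat.sqrt n), (n - u ^ 2).divisors.card) + n.divisors.card := by
    rw [hcardC, hdecomp, Finset.sum_union hdis1, Finset.sum_union hdis2, hneg, hnat]
    norm_num [Finset.sum_singleton]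
    ring
  have hBC : (B.card : ℤ) ≤ (C.card : ℤ) := by exact_mod_cast hcard
  rw [hsum_card]
  refine le_trans hBC (le_of_eq ?_)
  rw [hfinal]
  push_cast
  ring

end

end Arnold

/-- Lemma 3, case of even `p`: with `Δ = p² + 4q` positive and not a perfect square,
and `n = Δ/4 ∈ ℤ`, the sum of the partial quotients over one least period of the
continued fraction of `frac (x₊(p,q))` is at most
`2 Σ_{u=1}^{⌊√n⌋} τ(n − u²) + τ(n)`. -/
theorem arnold_lemma3_even (p q : ℤ) (hp : Even p)
    (hΔ : 0 < p ^ 2 + 4 * q) (hns : ¬ IsSquare (p ^ 2 + 4 * q)) :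
    periodSum p q ≤
      2 * (∑ u ∈ Finset.Icc 1 (Nat.sqrt ((p ^ 2 + 4 * q) / 4).toNat),
            (((((p ^ 2 + 4 * q) / 4).toNat - u ^ 2).divisors.card : ℤ)))
        + ((((p ^ 2 + 4 * q) / 4).toNat.divisors.card : ℤ)) := by
  obtain ⟨m, hm⟩ := hp
  set n : ℕ := ((p ^ 2 + 4 * q) / 4).toNat with hn
  have hpq : p ^ 2 + 4 * q = 4 * (m ^ 2 + q) := by rw [hm]; ring
  have hmq : 0 < m ^ 2 + q := by omega
  have hdiv : (p ^ 2 + 4 * q) / 4 = m ^ 2 + q := by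
    rw [hpq]; exact Int.mul_ediv_cancel_left _ (by norm_num)
  have hnz : (n : ℤ) = m ^ 2 + q := by rw [hn, hdiv, Int.toNat_of_nonneg (by omega)]
  have hnsq : ¬ IsSquare n := by
    rintro ⟨t, ht⟩
    apply hns
    refine ⟨2 * t, ?_⟩
    have h1 : (n : ℤ) = (t : ℤ) * t := by exact_mod_cast congrArg (Nat.cast : ℕ → ℤ) ht
    rw [hpq, ← hnz, h1]; ring
  have hirr : Irrational (Real.sqrt n) := irrational_sqrt_natCast_iff.2 hnsq
  have hres : ((p : ℝ) ^ 2 + 4 * (q : ℝ)) = 4 * (n : ℝ) := by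
    have h1 : ((p ^ 2 + 4 * q : ℤ) : ℝ) = ((4 * (n : ℤ) : ℤ) : ℝ) := by
      rw [hpq, hnz]
    push_cast at h1
    linarith
  have hsq4 : Real.sqrt ((p : ℝ) ^ 2 + 4 * (q : ℝ)) = 2 * Real.sqrt n := by
    rw [hres, show (4 : ℝ) * n = 2 ^ 2 * n by ring, Real.sqrt_mul (by positivity) _,
      Real.sqrt_sq (by norm_num : (0:ℝ) ≤ 2)]
  have hxp : xPlus p q = Real.sqrt n - (m : ℝ) := by
    rw [xPlus, hsq4, hm]
    push_cast
    ring
  have hfr : Int.fract (xPlus p q) = Int.fract (Real.sqrt n) := by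
    rw [hxp, Int.fract_sub_intCast]
  have key := Arnold.main_count hirr hnsq
  show periodSum p q ≤ _
  rw [periodSum, period]
  simp only [hfr]
  exact key
end

section
/- Let p, q be integers with p odd and Δ = p² + 4q positive and not a perfect square. Then the sum of the partial quotients over one least period of the continued fraction of frac(x₊(p,q)) satisfies Σ_{i=1}^{T(p,q)} a_i(frac(x₊(p,q))) ≤ 2·Σ_{j odd, j ≥ 1, j² < Δ} τ((Δ − j²)/4), where each (Δ − j²)/4 is a positive integer. (Lemma 3, case of odd p.) -/
open MeasureTheory Filter Set

/-! ### Auxiliary machinery -/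

/-- Invariant for the (P,Q)-data of a reduced complete quotient of discriminant `D`. -/
def ArnoldInvPQ (D P Q : ℤ) : Prop :=
  Odd P ∧ Even Q ∧ 0 < P ∧ 0 < Q ∧ (P : ℝ) ^ 2 < (D : ℝ) ∧
    Real.sqrt (D : ℝ) < (P : ℝ) + (Q : ℝ) ∧ 2 * Q ∣ (D - P ^ 2)

/-- `y` is a "good" quadratic irrational of discriminant `D`: `1/y = (√D + P)/Q` for
admissible data `(P,Q)`, and `y ∈ (0,1)`. -/
def ArnoldGoodY (D : ℤ) (y : ℝ) : Prop :=
  ∃ P Q : ℤ, ArnoldInvPQ D P Q ∧ y * (Real.sqrt (D : ℝ) + (P : ℝ)) = (Q : ℝ) ∧ 0 < y ∧ y < 1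

lemma arnold_good_step {D : ℤ} (hD0 : 0 < D) (hirr : Irrational (Real.sqrt (D : ℝ))) {y : ℝ}
    (h : ArnoldGoodY D y) : ArnoldGoodY D (gaussMap y) := by
  obtain ⟨P, Q, ⟨hPodd, hQeven, hPpos, hQpos, hP2, hPQ, hdvd⟩, hyeq, hy0, hy1⟩ := h
  set s : ℝ := Real.sqrt (D : ℝ) with hs
  have hs0 : 0 ≤ s := Real.sqrt_nonneg _
  have hs2 : s ^ 2 = (D : ℝ) := Real.sq_sqrt (by exact_mod_cast hD0.le)
  have hQR : (0 : ℝ) < (Q : ℝ) := by exact_mod_cast hQpos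
  have hPR : (0 : ℝ) < (P : ℝ) := by exact_mod_cast hPpos
  have hPs : (P : ℝ) < s := by nlinarith
  have hsP : (0 : ℝ) < s + P := by linarith
  have hyne : y ≠ 0 := ne_of_gt hy0
  have hinv : 1 / y = (s + P) / Q := by
    rw [div_eq_div_iff hyne (ne_of_gt hQR), one_mul, mul_comm, hyeq]
  obtain ⟨a, hadef⟩ : ∃ a : ℤ, a = ⌊1 / y⌋ := ⟨_, rfl⟩
  have hz1 : 1 < 1 / y := one_lt_one_div hy0 hy1
  have ha1 : 1 ≤ a := by
    rw [hadef]; exact Int.le_floor.mpr (by exact_mod_cast hz1.le)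
  obtain ⟨P₂, hP₂def⟩ : ∃ P₂ : ℤ, P₂ = a * Q - P := ⟨_, rfl⟩
  have hy'eq : gaussMap y = (s - P₂) / Q := by
    have hfl : ⌊(s + (P : ℝ)) / (Q : ℝ)⌋ = a := by rw [hadef, hinv]
    show Int.fract (1 / y) = _
    rw [Int.fract, hinv, hfl]
    rw [div_sub' (ne_of_gt hQR)]
    push_cast [hP₂def]
    ring_nf
  have hy'0 : 0 ≤ gaussMap y := Int.fract_nonneg _
  have hy'1 : gaussMap y < 1 := Int.fract_lt_one _
  have hsne : s ≠ (P₂ : ℝ) := hirr.ne_int P₂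
  have hy'pos : 0 < gaussMap y := by
    rcases lt_or_eq_of_le hy'0 with h | h
    · exact h
    · exfalso; apply hsne
      have := hy'eq.symm.trans h.symm
      field_simp at this
      linarith
  have hP₂lt : (P₂ : ℝ) < s := by
    have := hy'pos
    rw [hy'eq] at this
    have := (div_pos_iff.mp this)
    rcases this with ⟨h1, _⟩ | ⟨_, h2⟩
    · linarith
    · linarith
  have hP₂gt : -s < (P₂ : ℝ) := by
    have h1 : (Q : ℝ) - P ≤ (P₂ : ℝ) := by
      have ha : (1 : ℝ) ≤ (a : ℝ) := by exact_mod_cast ha1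
      have h2 : (P₂ : ℝ) = (a : ℝ) * Q - P := by rw [hP₂def]; push_cast; ring
      have h3 : 0 ≤ ((a : ℝ) - 1) * Q := mul_nonneg (by linarith) hQR.le
      linarith
    linarith
  have hP₂sq : (P₂ : ℝ) ^ 2 < (D : ℝ) := by nlinarith
  have hP₂sqZ : P₂ ^ 2 < D := by exact_mod_cast hP₂sq
  obtain ⟨c, hc⟩ := hQeven
  have hdvd2 : 2 * Q ∣ D - P₂ ^ 2 := by
    have key : D - P₂ ^ 2 = (D - P ^ 2) + (2 * Q) * (a * P - a ^ 2 * c) := by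
      rw [hP₂def, hc]; ring
    rw [key]
    exact dvd_add hdvd ⟨a * P - a ^ 2 * c, rfl⟩
  have hQdvd : Q ∣ D - P₂ ^ 2 := dvd_trans ⟨2, by ring⟩ hdvd2
  obtain ⟨Q₂, hQ₂def⟩ : ∃ Q₂ : ℤ, Q₂ = (D - P₂ ^ 2) / Q := ⟨_, rfl⟩
  have hQ₂ : Q * Q₂ = D - P₂ ^ 2 := by rw [hQ₂def]; exact Int.mul_ediv_cancel' hQdvd
  have hQ₂pos : 0 < Q₂ := by
    have h1 : 0 < D - P₂ ^ 2 := by omega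
    nlinarith
  have hQ₂R : (0 : ℝ) < (Q₂ : ℝ) := by exact_mod_cast hQ₂pos
  have hQ₂even : Even Q₂ := by
    obtain ⟨t, ht⟩ := hdvd2
    have : Q * Q₂ = Q * (2 * t) := by rw [hQ₂]; rw [ht]; ring
    have : Q₂ = 2 * t := mul_left_cancel₀ (by omega) this
    exact ⟨t, by omega⟩
  have hdvd₂ : 2 * Q₂ ∣ D - P₂ ^ 2 := ⟨c, by rw [← hQ₂, hc]; ring⟩
  have hP₂odd : Odd P₂ := by
    obtain ⟨k, hk⟩ := hPodd
    exact ⟨a * c - k - 1, by rw [hP₂def, hc, hk]; ring⟩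
  have hprod : (s - (P₂ : ℝ)) * (s + (P₂ : ℝ)) = (Q : ℝ) * (Q₂ : ℝ) := by
    have : ((Q * Q₂ : ℤ) : ℝ) = ((D : ℤ) : ℝ) - ((P₂ ^ 2 : ℤ) : ℝ) := by
      rw [hQ₂]; push_cast; ring
    push_cast at this
    nlinarith
  have hsP₂ : (0 : ℝ) < s + P₂ := by linarith
  have hy'eq2 : gaussMap y * (s + (P₂ : ℝ)) = (Q₂ : ℝ) := by
    rw [hy'eq, div_mul_eq_mul_div, hprod, mul_comm, mul_div_assoc,
      div_self (ne_of_gt hQR), mul_one]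
  have hA : s < (P₂ : ℝ) + (Q₂ : ℝ) := by
    have hQlt : (Q : ℝ) < s + P₂ := by
      have h1 : (1 : ℝ) ≤ (a : ℝ) := by exact_mod_cast ha1
      have h2 : (P₂ : ℝ) = (a : ℝ) * Q - P := by rw [hP₂def]; push_cast; ring
      have h3 : 0 ≤ ((a : ℝ) - 1) * Q := mul_nonneg (by linarith) hQR.le
      linarith only [h2, h3, hPs]
    have h2 : (s - (P₂ : ℝ)) * (s + P₂) < (Q₂ : ℝ) * (s + P₂) := by
      rw [hprod]
      exact mul_lt_mul_of_pos_right hQlt hQ₂R |>.trans_eq (mul_comm _ _)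
    have h3 := lt_of_mul_lt_mul_right h2 hsP₂.le
    linarith
  have hB : (Q₂ : ℝ) < s + P₂ := by
    have h := mul_lt_mul_of_pos_right hy'1 hsP₂
    rw [hy'eq2, one_mul] at h
    exact h
  have hP₂pos : 0 < P₂ := by
    have : (0 : ℝ) < (P₂ : ℝ) := by linarith
    exact_mod_cast this
  exact ⟨P₂, Q₂, ⟨hP₂odd, hQ₂even, hP₂pos, hQ₂pos, hP₂sq, hA, hdvd₂⟩, hy'eq2, hy'pos, hy'1⟩

lemma arnold_D_ge5 (p q : ℤ) (hp : Odd p) (hΔ : 0 < p ^ 2 + 4 * q)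
    (hns : ¬ IsSquare (p ^ 2 + 4 * q)) : 5 ≤ p ^ 2 + 4 * q := by
  obtain ⟨k, hk⟩ := hp
  have h4 : (p ^ 2 + 4 * q) % 4 = 1 := by
    have : p ^ 2 + 4 * q = 4 * (k ^ 2 + k + q) + 1 := by rw [hk]; ring
    omega
  have h1 : p ^ 2 + 4 * q ≠ 1 := fun h => hns (h ▸ IsSquare.one)
  omega

lemma arnold_sqrt_irr (D : ℤ) (hD0 : 0 ≤ D) (hns : ¬ IsSquare D) :
    Irrational (Real.sqrt (D : ℝ)) := by
  rw [irrational_sqrt_intCast_iff]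
  exact ⟨hns, hD0⟩

lemma arnold_good_base (p q : ℤ) (hp : Odd p) (hΔ : 0 < p ^ 2 + 4 * q)
    (hns : ¬ IsSquare (p ^ 2 + 4 * q)) :
    ArnoldGoodY (p ^ 2 + 4 * q) (Int.fract (xPlus p q)) := by
  obtain ⟨D, hD⟩ : ∃ D : ℤ, D = p ^ 2 + 4 * q := ⟨_, rfl⟩
  rw [← hD]
  have hD0 : 0 < D := hD ▸ hΔ
  have hD5 : 5 ≤ D := hD ▸ arnold_D_ge5 p q hp hΔ hns
  have hirr : Irrational (Real.sqrt (D : ℝ)) := arnold_sqrt_irr D hD0.le (hD ▸ hns)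
  obtain ⟨s, hs⟩ : ∃ s : ℝ, s = Real.sqrt (D : ℝ) := ⟨_, rfl⟩
  rw [← hs] at hirr
  have hs0 : 0 ≤ s := hs ▸ Real.sqrt_nonneg _
  have hs2 : s ^ 2 = (D : ℝ) := hs ▸ Real.sq_sqrt (by exact_mod_cast hD0.le)
  have hsgt2 : (2 : ℝ) < s := by nlinarith [show (5:ℝ) ≤ (D:ℝ) by exact_mod_cast hD5]
  obtain ⟨n, hn⟩ : ∃ n : ℤ, n = ⌊xPlus p q⌋ := ⟨_, rfl⟩
  obtain ⟨r, hr⟩ : ∃ r : ℤ, r = p + 2 * n := ⟨_, rfl⟩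
  obtain ⟨Q1, hQ1⟩ : ∃ Q1 : ℤ, Q1 = 2 * (q - p * n - n ^ 2) := ⟨_, rfl⟩
  obtain ⟨ξ, hξ0⟩ : ∃ ξ : ℝ, ξ = Int.fract (xPlus p q) := ⟨_, rfl⟩
  rw [← hξ0]
  have hxp : xPlus p q = (s - p) / 2 := by
    rw [xPlus, hs, hD]; push_cast; ring_nf
  have hξ : ξ = (s - r) / 2 := by
    rw [hξ0, Int.fract, ← hn, hxp, hr]; push_cast; ring
  have hξirr : Irrational ξ := by
    rw [hξ]
    have h1 : Irrational (s - (r : ℝ)) := hirr.sub_intCast r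
    have := h1.div_intCast (m := 2) (by norm_num)
    simpa using this
  have hξlt : ξ < 1 := hξ0 ▸ Int.fract_lt_one _
  have hξpos : 0 < ξ := by
    rcases lt_or_eq_of_le (hξ0 ▸ Int.fract_nonneg (xPlus p q)) with h | h
    · exact h
    · exact absurd h.symm hξirr.ne_zero
  have hrs : (r : ℝ) < s := by rw [hξ] at hξpos; linarith
  have hrs2 : s - 2 < (r : ℝ) := by rw [hξ] at hξlt; linarith
  have hrpos : 0 < r := by exact_mod_cast show (0:ℝ) < (r:ℝ) by linarith
  have hrodd : Odd r := by
    obtain ⟨k, hk⟩ := hp; exact ⟨k + n, by rw [hr, hk]; ring⟩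
  have hkey : 2 * Q1 = D - r ^ 2 := by rw [hQ1, hr, hD]; ring
  have hr2D : r ^ 2 < D := by
    have : (r : ℝ) ^ 2 < (D : ℝ) := by nlinarith
    exact_mod_cast this
  have hQ1pos : 0 < Q1 := by omega
  have hQ1R : (Q1 : ℝ) = ((D : ℝ) - (r : ℝ) ^ 2) / 2 := by
    have h : 2 * (Q1 : ℝ) = (D : ℝ) - (r : ℝ) ^ 2 := by exact_mod_cast hkey
    linarith
  have heq : ξ * (s + (r : ℝ)) = (Q1 : ℝ) := by
    rw [hξ, hQ1R, ← hs2]; ring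
  refine ⟨r, Q1, ⟨hrodd, ⟨q - p * n - n ^ 2, by omega⟩, hrpos, hQ1pos,
    by exact_mod_cast hr2D, ?_, ⟨1, by omega⟩⟩, by rw [← hs]; exact heq, hξpos, hξlt⟩
  rw [← hs]
  have h1 : (1 : ℝ) ≤ (r : ℝ) := by exact_mod_cast hrpos
  nlinarith [heq, hξpos, hξlt]

/-- Facts about `P' = m Q - P` for `1 ≤ m ≤ ⌊1/y⌋`. -/
lemma arnold_pair_facts {D P Q : ℤ} (hD0 : 0 < D) (hirr : Irrational (Real.sqrt (D : ℝ)))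
    (hInv : ArnoldInvPQ D P Q) {y : ℝ} (heq : y * (Real.sqrt (D : ℝ) + (P : ℝ)) = (Q : ℝ))
    (hy0 : 0 < y) (hy1 : y < 1) (m : ℤ) (hm1 : 1 ≤ m) (hm2 : m ≤ ⌊1 / y⌋) :
    Odd (m * Q - P) ∧ (m * Q - P) ^ 2 < D ∧ 2 * Q ∣ D - (m * Q - P) ^ 2 := by
  obtain ⟨hPodd, hQeven, hPpos, hQpos, hP2, hPQ, hdvd⟩ := hInv
  obtain ⟨s, hs⟩ : ∃ s : ℝ, s = Real.sqrt (D : ℝ) := ⟨_, rfl⟩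
  rw [← hs] at heq hPQ hirr
  have hs0 : 0 ≤ s := hs ▸ Real.sqrt_nonneg _
  have hs2 : s ^ 2 = (D : ℝ) := hs ▸ Real.sq_sqrt (by exact_mod_cast hD0.le)
  have hQR : (0 : ℝ) < (Q : ℝ) := by exact_mod_cast hQpos
  have hPR : (0 : ℝ) < (P : ℝ) := by exact_mod_cast hPpos
  have hPs : (P : ℝ) < s := by nlinarith
  have hsP : (0 : ℝ) < s + P := by linarith
  have hyne : y ≠ 0 := ne_of_gt hy0
  have hinv : 1 / y = (s + P) / Q := by
    rw [div_eq_div_iff hyne (ne_of_gt hQR), one_mul, mul_comm, heq]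
  rw [hinv] at hm2
  have hmle : (m : ℝ) ≤ (s + P) / Q := by
    have h1 : ((⌊(s + (P : ℝ)) / (Q : ℝ)⌋ : ℤ) : ℝ) ≤ (s + P) / Q := Int.floor_le _
    have h2 : (m : ℝ) ≤ ((⌊(s + (P : ℝ)) / (Q : ℝ)⌋ : ℤ) : ℝ) := by exact_mod_cast hm2
    linarith
  have hub : ((m * Q - P : ℤ) : ℝ) ≤ s := by
    have h3 : (m : ℝ) * Q ≤ (s + P) / Q * Q := mul_le_mul_of_nonneg_right hmle hQR.le
    rw [div_mul_cancel₀ _ (ne_of_gt hQR)] at h3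
    push_cast
    linarith
  have hlb : -s < ((m * Q - P : ℤ) : ℝ) := by
    have h1 : (1 : ℝ) ≤ (m : ℝ) := by exact_mod_cast hm1
    have h2 : (Q : ℝ) - P ≤ (m : ℝ) * Q - P := by nlinarith
    push_cast
    push_cast at h2
    linarith
  have hsqle : (m * Q - P) ^ 2 ≤ D := by
    have : ((m * Q - P : ℤ) : ℝ) ^ 2 ≤ (D : ℝ) := by nlinarith
    exact_mod_cast this
  have hne : (m * Q - P) ^ 2 ≠ D := by
    intro h
    have hre : ((m * Q - P : ℤ) : ℝ) ^ 2 = s ^ 2 := by rw [hs2]; exact_mod_cast h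
    have : (s - ((m * Q - P : ℤ) : ℝ)) * (s + ((m * Q - P : ℤ) : ℝ)) = 0 := by nlinarith
    rcases mul_eq_zero.mp this with h' | h'
    · exact (hs ▸ hirr).ne_int (m * Q - P) (by linarith)
    · exact (hs ▸ hirr).ne_int (-(m * Q - P)) (by push_cast; linarith)
  obtain ⟨c, hc⟩ := hQeven
  obtain ⟨t, ht⟩ := hPodd
  refine ⟨⟨m * c - t - 1, by rw [hc, ht]; ring⟩, lt_of_le_of_ne hsqle hne, ?_⟩
  have key : D - (m * Q - P) ^ 2 = (D - P ^ 2) + (2 * Q) * (m * P - m ^ 2 * c) := by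
    rw [hc]; ring
  rw [key]
  exact dvd_add hdvd ⟨m * P - m ^ 2 * c, rfl⟩

lemma arnold_digit_shift (ξ : ℝ) (k t : ℕ)
    (h : gaussMap^[k + t] ξ = gaussMap^[k] ξ) :
    ∀ i, k + 1 ≤ i → cfDigit (i + t) ξ = cfDigit i ξ := by
  intro i hi
  have e1 : gaussMap^[i - 1] ξ = gaussMap^[i - 1 - k] (gaussMap^[k] ξ) := by
    rw [← Function.iterate_add_apply]
    congr 1
    omega
  have e2 : gaussMap^[i + t - 1] ξ = gaussMap^[i - 1 - k] (gaussMap^[k + t] ξ) := by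
    rw [← Function.iterate_add_apply]
    congr 1
    omega
  show ⌊1 / gaussMap^[i + t - 1] ξ⌋ = ⌊1 / gaussMap^[i - 1] ξ⌋
  rw [e2, e1, h]

set_option maxHeartbeats 2000000 in
/-- Lemma 3, case of odd `p`: with `Δ = p² + 4q` positive and not a perfect square,
each `(Δ − j²)/4` (for odd `j ≥ 1` with `j² < Δ`) is a positive integer, and the sum
of the partial quotients over one least period of the continued fraction of
`frac (x₊(p,q))` is at most `2 Σ_{j odd, j ≥ 1, j² < Δ} τ((Δ − j²)/4)`. -/
theorem arnold_lemma3_odd (p q : ℤ) (hp : Odd p)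
    (hΔ : 0 < p ^ 2 + 4 * q) (hns : ¬ IsSquare (p ^ 2 + 4 * q)) :
    (∀ j : ℕ, Odd j → (j : ℤ) ^ 2 < p ^ 2 + 4 * q →
      (4 : ℤ) ∣ (p ^ 2 + 4 * q - (j : ℤ) ^ 2) ∧ 0 < (p ^ 2 + 4 * q - (j : ℤ) ^ 2) / 4) ∧
    periodSum p q ≤
      2 * ∑ j ∈ (Finset.range (p ^ 2 + 4 * q).toNat).filter
            (fun j : ℕ => Odd j ∧ (j : ℤ) ^ 2 < p ^ 2 + 4 * q),
          ((((p ^ 2 + 4 * q - (j : ℤ) ^ 2) / 4).toNat.divisors.card : ℤ)) := by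
  have part1 : ∀ j : ℕ, Odd j → (j : ℤ) ^ 2 < p ^ 2 + 4 * q →
      (4 : ℤ) ∣ (p ^ 2 + 4 * q - (j : ℤ) ^ 2) ∧ 0 < (p ^ 2 + 4 * q - (j : ℤ) ^ 2) / 4 := by
    intro j hj hj2
    obtain ⟨k, hk⟩ := hp
    obtain ⟨l, hl⟩ := hj
    have hjz : (j : ℤ) = 2 * l + 1 := by exact_mod_cast hl
    have hid : p ^ 2 + 4 * q - (j : ℤ) ^ 2 = 4 * (k ^ 2 + k + q - l ^ 2 - l) := by
      rw [hjz, hk]; ring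
    refine ⟨⟨_, hid⟩, ?_⟩
    rw [hid, Int.mul_ediv_cancel_left _ (by norm_num)]
    have h0 : 0 < 4 * (k ^ 2 + k + q - l ^ 2 - l) := hid ▸ (by linarith)
    linarith
  refine ⟨part1, ?_⟩
  obtain ⟨D, hD⟩ : ∃ D : ℤ, D = p ^ 2 + 4 * q := ⟨_, rfl⟩
  rw [← hD]
  by_cases hne : {T : ℕ | 1 ≤ T ∧ ∀ i : ℕ, 1 ≤ i →
      cfDigit (i + T) (Int.fract (xPlus p q)) = cfDigit i (Int.fract (xPlus p q))}.Nonempty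
  swap
  · have hper : period p q = 0 := by
      rw [period, Set.not_nonempty_iff_eq_empty.mp hne, Nat.sInf_empty]
    rw [periodSum, hper, Finset.Icc_eq_empty (by omega), Finset.sum_empty]
    have : (0:ℤ) ≤ ∑ j ∈ (Finset.range D.toNat).filter
        (fun j : ℕ => Odd j ∧ (j : ℤ) ^ 2 < D),
        ((((D - (j : ℤ) ^ 2) / 4).toNat.divisors.card : ℤ)) :=
      Finset.sum_nonneg fun j _ => Int.natCast_nonneg _
    linarith
  · have hD0 : 0 < D := hD ▸ hΔ
    have hirr : Irrational (Real.sqrt (D : ℝ)) := arnold_sqrt_irr D hD0.le (hD ▸ hns)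
    obtain ⟨Y, hY⟩ : ∃ Y : ℕ → ℝ, Y = fun k => gaussMap^[k] (Int.fract (xPlus p q)) :=
      ⟨_, rfl⟩
    have hgood0 : ∀ k : ℕ, ArnoldGoodY D (gaussMap^[k] (Int.fract (xPlus p q))) := by
      intro k
      induction k with
      | zero =>
          rw [Function.iterate_zero_apply, hD]
          exact arnold_good_base p q hp hΔ hns
      | succ k ih =>
          rw [Function.iterate_succ_apply']
          exact arnold_good_step hD0 hirr ih
    have hgood : ∀ k : ℕ, ArnoldGoodY D (Y k) := by
      intro k
      rw [hY]
      exact hgood0 k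
    unfold ArnoldGoodY at hgood
    choose P Q hInv heq hy0 hy1 using hgood
    -- digit basics
    have hdig : ∀ k : ℕ, cfDigit (k + 1) (Int.fract (xPlus p q)) = ⌊1 / Y k⌋ := by
      intro k
      rw [hY]
      rfl
    have ha1 : ∀ k, 1 ≤ ⌊1 / Y k⌋ := fun k =>
      Int.le_floor.mpr (by exact_mod_cast (one_lt_one_div (hy0 k) (hy1 k)).le)
    obtain ⟨A, hA⟩ : ∃ A : ℕ → ℕ, A = fun k => (⌊1 / Y k⌋).toNat := ⟨_, rfl⟩
    have hAcast : ∀ k, ((A k : ℤ)) = ⌊1 / Y k⌋ := by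
      intro k
      rw [hA]
      exact Int.toNat_of_nonneg (le_trans zero_le_one (ha1 k))
    -- period facts
    obtain ⟨T, hTdef⟩ : ∃ T, T = period p q := ⟨_, rfl⟩
    have hTmem : 1 ≤ T ∧ ∀ i : ℕ, 1 ≤ i →
        cfDigit (i + T) (Int.fract (xPlus p q)) = cfDigit i (Int.fract (xPlus p q)) := by
      rw [hTdef]
      exact Nat.sInf_mem hne
    obtain ⟨hT1, hTper⟩ := hTmem
    have hmin : ∀ t : ℕ, (1 ≤ t ∧ ∀ i : ℕ, 1 ≤ i →
        cfDigit (i + t) (Int.fract (xPlus p q)) = cfDigit i (Int.fract (xPlus p q))) →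
        T ≤ t := by
      intro t ht
      rw [hTdef]
      exact Nat.sInf_le ht
    -- LHS as a sum of naturals
    have hLHS : periodSum p q = ∑ k ∈ Finset.range T, ((A k : ℤ)) := by
      rw [periodSum, ← hTdef, ← Finset.Ico_add_one_right_eq_Icc, Finset.sum_Ico_eq_sum_range]
      refine Finset.sum_congr rfl fun k _ => ?_
      rw [Nat.add_comm 1 k, hdig k, hAcast k]
    -- source finset
    obtain ⟨Src, hSrc⟩ : ∃ Src : Finset ((_ : ℕ) × ℕ),
        Src = (Finset.range T).sigma (fun k => Finset.Icc 1 (A k)) := ⟨_, rfl⟩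
    have hSrcCard : Src.card = ∑ k ∈ Finset.range T, A k := by
      rw [hSrc, Finset.card_sigma]
      refine Finset.sum_congr rfl fun k _ => ?_
      rw [Nat.card_Icc]
      omega
    -- target finset
    obtain ⟨J, hJ⟩ : ∃ J : Finset ℕ,
        J = (Finset.range D.toNat).filter (fun j : ℕ => Odd j ∧ (j : ℤ) ^ 2 < D) := ⟨_, rfl⟩
    obtain ⟨Tgt, hTgt⟩ : ∃ Tgt : Finset ((_ : ℕ) × (ℕ × Bool)),
        Tgt = J.sigma (fun j => (((D - (j : ℤ) ^ 2) / 4).toNat.divisors ×ˢ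
          (Finset.univ : Finset Bool))) := ⟨_, rfl⟩
    have hTgtCard : Tgt.card = ∑ j ∈ J, ((D - (j : ℤ) ^ 2) / 4).toNat.divisors.card * 2 := by
      rw [hTgt, Finset.card_sigma]
      refine Finset.sum_congr rfl fun j _ => ?_
      rw [Finset.card_product, Finset.card_univ, Fintype.card_bool]
    -- the injection
    obtain ⟨ψ, hψ⟩ : ∃ ψ : ((_ : ℕ) × ℕ) → ((_ : ℕ) × (ℕ × Bool)),
        ψ = fun x => ⟨((x.2 : ℤ) * Q x.1 - P x.1).natAbs,
          ((Q x.1 / 2).toNat, decide (0 < (x.2 : ℤ) * Q x.1 - P x.1))⟩ := ⟨_, rfl⟩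
    -- membership
    have hmaps : ∀ x ∈ Src, ψ x ∈ Tgt := by
      rintro ⟨k, m⟩ hx
      rw [hSrc, Finset.mem_sigma, Finset.mem_range, Finset.mem_Icc] at hx
      obtain ⟨hkT, hm1, hm2⟩ := hx
      have hm1' : (1 : ℤ) ≤ (m : ℤ) := by exact_mod_cast hm1
      have hm2' : (m : ℤ) ≤ ⌊1 / Y k⌋ := by
        rw [← hAcast k]; exact_mod_cast hm2
      obtain ⟨hodd, hsqlt, hdvd2⟩ :=
        arnold_pair_facts hD0 hirr (hInv k) (heq k) (hy0 k) (hy1 k) (m : ℤ) hm1' hm2'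
      obtain ⟨P', hP'⟩ : ∃ P' : ℤ, P' = (m : ℤ) * Q k - P k := ⟨_, rfl⟩
      rw [← hP'] at hodd hsqlt hdvd2
      have hP'ne : P' ≠ 0 := by
        intro h
        rw [h] at hodd
        exact (Int.not_odd_iff_even.mpr Even.zero) hodd
      have hsqnat : ((P'.natAbs : ℤ)) ^ 2 = P' ^ 2 := by
        have h := Int.natAbs_mul_self (a := P')
        push_cast at h ⊢
        nlinarith [h]
      have hjodd : Odd P'.natAbs := Int.natAbs_odd.mpr hodd
      have hjpos : 0 < P'.natAbs := Int.natAbs_pos.mpr hP'ne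
      have hjsq : ((P'.natAbs : ℤ)) ^ 2 < D := by rw [hsqnat]; exact hsqlt
      have hjlt : P'.natAbs < D.toNat := by
        have h1 : P'.natAbs ≤ P'.natAbs * P'.natAbs :=
          Nat.le_mul_of_pos_left _ hjpos
        have h2 : ((P'.natAbs * P'.natAbs : ℕ) : ℤ) < D := by
          have hj2 := hjsq
          push_cast at hj2 ⊢
          nlinarith [hj2]
        omega
      -- divisor part
      obtain ⟨c, hc⟩ := (hInv k).2.1
      have hc0 : 0 < c := by have := (hInv k).2.2.2.1; omega
      obtain ⟨t, ht⟩ := hdvd2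
      have hDj : D - ((P'.natAbs : ℤ)) ^ 2 = 4 * (c * t) := by
        rw [hsqnat, ht, hc]; ring
      have hct : 0 < c * t := by
        have h1 : 0 < D - ((P'.natAbs : ℤ)) ^ 2 := by omega
        omega
      rw [hψ, hTgt]
      rw [Finset.mem_sigma]
      constructor
      · rw [hJ, Finset.mem_filter, Finset.mem_range]
        refine ⟨?_, ?_, ?_⟩
        · show ((m : ℤ) * Q k - P k).natAbs < D.toNat
          rw [← hP']; exact hjlt
        · show Odd ((m : ℤ) * Q k - P k).natAbs
          rw [← hP']; exact hjodd
        · show ((((m : ℤ) * Q k - P k).natAbs : ℤ)) ^ 2 < D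
          rw [← hP']; exact hjsq
      · rw [Finset.mem_product]
        refine ⟨?_, Finset.mem_univ _⟩
        rw [Nat.mem_divisors]
        constructor
        · show (Q k / 2).toNat ∣ ((D - ((((m : ℤ) * Q k - P k).natAbs : ℤ)) ^ 2) / 4).toNat
          rw [← hP', hDj, Int.mul_ediv_cancel_left _ (by norm_num)]
          have hq2 : Q k / 2 = c := by omega
          rw [hq2]
          have h1 : ((c.toNat : ℤ)) = c := Int.toNat_of_nonneg hc0.le
          have h2 : (((c * t).toNat : ℤ)) = c * t := Int.toNat_of_nonneg hct.le
          have h3 : (c.toNat : ℤ) ∣ ((c * t).toNat : ℤ) := by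
            rw [h1, h2]; exact ⟨t, rfl⟩
          exact_mod_cast h3
        · show ((D - ((((m : ℤ) * Q k - P k).natAbs : ℤ)) ^ 2) / 4).toNat ≠ 0
          rw [← hP', hDj, Int.mul_ediv_cancel_left _ (by norm_num)]
          omega
    -- injectivity
    have hPlt : ∀ k, (P k : ℝ) < Real.sqrt (D : ℝ) := by
      intro k
      have h1 := (hInv k).2.2.2.2.1
      have h2 := (hInv k).2.2.1
      have h2' : (0 : ℝ) < (P k : ℝ) := by exact_mod_cast h2
      nlinarith [Real.sq_sqrt (show (0:ℝ) ≤ (D:ℝ) by exact_mod_cast hD0.le),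
        Real.sqrt_nonneg ((D : ℝ))]
    have hPQs : ∀ k, Real.sqrt (D : ℝ) < (P k : ℝ) + (Q k : ℝ) := fun k =>
      (hInv k).2.2.2.2.2.1
    -- no repeats within the period
    have hcontra : ∀ a b : ℕ, a < b → b < T → Y b = Y a → False := by
      intro a b hab hbT hYeq
      have hiter : gaussMap^[a + (b - a)] (Int.fract (xPlus p q)) =
          gaussMap^[a] (Int.fract (xPlus p q)) := by
        rw [show a + (b - a) = b by omega]
        rw [hY] at hYeq
        exact hYeq
      have hshift := arnold_digit_shift _ a (b - a) hiter
      have hmult : ∀ i, 1 ≤ i → ∀ N : ℕ,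
          cfDigit (i + N * T) (Int.fract (xPlus p q)) = cfDigit i (Int.fract (xPlus p q)) := by
        intro i hi N
        induction N with
        | zero => simp
        | succ N ih =>
            rw [show i + (N + 1) * T = (i + N * T) + T by ring,
              hTper (i + N * T) (by omega), ih]
      have hmem : 1 ≤ b - a ∧ ∀ i : ℕ, 1 ≤ i →
          cfDigit (i + (b - a)) (Int.fract (xPlus p q)) =
            cfDigit i (Int.fract (xPlus p q)) := by
        refine ⟨by omega, fun i hi => ?_⟩
        have h1 : a + 1 ≤ (a + 1) * T := Nat.le_mul_of_pos_right _ (by omega)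
        calc cfDigit (i + (b - a)) (Int.fract (xPlus p q))
            = cfDigit ((i + (b - a)) + (a + 1) * T) (Int.fract (xPlus p q)) :=
              (hmult _ (by omega) _).symm
          _ = cfDigit ((i + (a + 1) * T) + (b - a)) (Int.fract (xPlus p q)) := by
              rw [show (i + (b - a)) + (a + 1) * T = (i + (a + 1) * T) + (b - a) by ring]
          _ = cfDigit (i + (a + 1) * T) (Int.fract (xPlus p q)) := hshift _ (by omega)
          _ = cfDigit i (Int.fract (xPlus p q)) := hmult _ hi _
      have := hmin _ hmem
      omega
    have hinj : Set.InjOn ψ Src := by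
      rintro ⟨k, m⟩ hx ⟨k', m'⟩ hx' hψeq
      rw [Finset.mem_coe, hSrc, Finset.mem_sigma, Finset.mem_range, Finset.mem_Icc] at hx hx'
      obtain ⟨hkT, hm1, hm2⟩ := hx
      obtain ⟨hkT', hm1', hm2'⟩ := hx'
      rw [hψ] at hψeq
      simp only at hψeq
      have h1 : ((m : ℤ) * Q k - P k).natAbs = ((m' : ℤ) * Q k' - P k').natAbs :=
        congrArg Sigma.fst hψeq
      have h2 : ((Q k / 2).toNat, decide (0 < (m : ℤ) * Q k - P k)) =
          ((Q k' / 2).toNat, decide (0 < (m' : ℤ) * Q k' - P k')) :=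
        eq_of_heq (Sigma.mk.inj_iff.mp hψeq).2
      have hd : (Q k / 2).toNat = (Q k' / 2).toNat := congrArg Prod.fst h2
      have hb : decide (0 < (m : ℤ) * Q k - P k) = decide (0 < (m' : ℤ) * Q k' - P k') :=
        congrArg Prod.snd h2
      have hbiff : (0 < (m : ℤ) * Q k - P k) ↔ (0 < (m' : ℤ) * Q k' - P k') :=
        decide_eq_decide.mp hb
      -- oddness for both
      have hfacts := arnold_pair_facts hD0 hirr (hInv k) (heq k) (hy0 k) (hy1 k) (m : ℤ)
        (by exact_mod_cast hm1) (by rw [← hAcast k]; exact_mod_cast hm2)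
      have hfacts' := arnold_pair_facts hD0 hirr (hInv k') (heq k') (hy0 k') (hy1 k') (m' : ℤ)
        (by exact_mod_cast hm1') (by rw [← hAcast k']; exact_mod_cast hm2')
      have hodd1 : ((m : ℤ) * Q k - P k) % 2 = 1 := Int.odd_iff.mp hfacts.1
      have hodd2 : ((m' : ℤ) * Q k' - P k') % 2 = 1 := Int.odd_iff.mp hfacts'.1
      have hP'eq : (m : ℤ) * Q k - P k = (m' : ℤ) * Q k' - P k' := by omega
      -- Q equal
      have hQe1 : Q k % 2 = 0 := Int.even_iff.mp (hInv k).2.1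
      have hQe2 : Q k' % 2 = 0 := Int.even_iff.mp (hInv k').2.1
      have hQp1 : 0 < Q k := (hInv k).2.2.2.1
      have hQp2 : 0 < Q k' := (hInv k').2.2.2.1
      have hQeq : Q k = Q k' := by omega
      -- P equal
      have hPeq : P k = P k' := by
        have hdvd : Q k ∣ P k - P k' := by
          refine ⟨(m : ℤ) - (m' : ℤ), ?_⟩
          rw [hQeq] at hP'eq ⊢
          linarith
        have hr1 : (P k : ℝ) - (P k' : ℝ) < (Q k : ℝ) := by
          have := hPlt k
          have := hPQs k'
          rw [← hQeq] at this
          linarith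
        have hr2 : (P k' : ℝ) - (P k : ℝ) < (Q k : ℝ) := by
          have := hPlt k'
          have := hPQs k
          linarith
        have hz1 : P k - P k' < Q k := by exact_mod_cast hr1
        have hz2 : P k' - P k < Q k := by exact_mod_cast hr2
        have := Int.eq_zero_of_abs_lt_dvd hdvd (abs_lt.mpr ⟨by omega, hz1⟩)
        omega
      -- m equal
      have hmeq : m = m' := by
        have : (m : ℤ) * Q k = (m' : ℤ) * Q k := by
          rw [hQeq] at hP'eq ⊢
          rw [hPeq] at hP'eq
          linarith
        have := mul_right_cancel₀ (show (Q k : ℤ) ≠ 0 by omega) this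
        exact_mod_cast this
      -- k equal
      have hYeq : Y k = Y k' := by
        have e1 := heq k
        have e2 := heq k'
        rw [hPeq, hQeq] at e1
        have hpos : (0 : ℝ) < Real.sqrt (D : ℝ) + (P k' : ℝ) := by
          have := hPlt k'
          have h2' : (0 : ℝ) < (P k' : ℝ) := by exact_mod_cast (hInv k').2.2.1
          have := Real.sqrt_nonneg ((D : ℝ))
          linarith
        have := e1.trans e2.symm
        exact mul_right_cancel₀ (ne_of_gt hpos) this
      have hkeq : k = k' := by
        rcases lt_trichotomy k k' with h | h | h
        · exact absurd (hcontra k k' h hkT' hYeq.symm) not_false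
        · exact h
        · exact absurd (hcontra k' k h hkT hYeq) not_false
      subst hkeq
      subst hmeq
      rfl
    -- put it together
    have hcard := Finset.card_le_card_of_injOn ψ hmaps hinj
    rw [hLHS, ← hJ]
    have e1 : ∑ k ∈ Finset.range T, ((A k : ℤ)) = (Src.card : ℤ) := by
      rw [hSrcCard]
      push_cast
      rfl
    have e2 : (Tgt.card : ℤ) = 2 * ∑ j ∈ J, ((((D - (j : ℤ) ^ 2) / 4).toNat.divisors.card : ℤ)) := by
      rw [hTgtCard]
      push_cast
      rw [Finset.mul_sum]
      exact Finset.sum_congr rfl fun j _ => mul_comm _ _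
    rw [e1, ← e2]
    exact_mod_cast hcard
end

section
/- There exists a constant C > 0 such that for every R ≥ 2, Σ_{(p,q)∈Ω_R} Σ_{i=1}^{T(p,q)} a_i(frac(x₊(p,q))) ≤ C·R³·(ln R)³. (Bound for the numerator of A'_R obtained in the proof of Theorem 2.) -/
open MeasureTheory Filter Set

noncomputable def sqD (D : ℤ) : ℝ := Real.sqrt (D : ℝ)

def IsRed (D P Q : ℤ) : Prop :=
  1 ≤ Q ∧ Q ∣ D - P^2 ∧ (P:ℝ) < sqD D ∧ sqD D - Q < P ∧ (Q:ℝ) < P + sqD D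

lemma omega_D_ge5 {R : ℝ} {p q : ℤ} (h : (p,q) ∈ OmegaSet R) : 5 ≤ p^2 + 4*q := by
  obtain ⟨-, hpos, hns⟩ := h
  simp only at hpos hns
  by_contra hlt
  push_neg at hlt
  have hsq : p^2 % 4 = 0 ∨ p^2 % 4 = 1 := by
    rcases Int.even_or_odd p with ⟨k, hk⟩ | ⟨k, hk⟩ <;> subst hk <;> [left; right] <;> ring_nf <;> omega
  have h14 : p^2 + 4*q = 1 ∨ p^2 + 4*q = 4 := by omega
  rcases h14 with h1 | h4
  · exact hns ⟨1, by omega⟩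
  · exact hns ⟨2, by omega⟩

lemma sqD_sq {D : ℤ} (hD : 0 ≤ D) : (sqD D)^2 = (D:ℝ) := by
  rw [sqD, Real.sq_sqrt (by exact_mod_cast hD)]

lemma sqD_gt2 {D : ℤ} (hD : 5 ≤ D) : 2 < sqD D := by
  have h2 := sqD_sq (by linarith : (0:ℤ) ≤ D)
  have h0 : 0 ≤ sqD D := Real.sqrt_nonneg _
  nlinarith [show (5:ℝ) ≤ (D:ℝ) by exact_mod_cast hD]

lemma sqD_irr {D : ℤ} (hD : 5 ≤ D) (hns : ¬ IsSquare D) : Irrational (sqD D) := by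
  refine irrational_nrt_of_notint_nrt 2 D (sqD_sq (by linarith)) ?_ two_pos
  rintro ⟨y, hy⟩
  apply hns
  refine ⟨y, ?_⟩
  have : (sqD D)^2 = ((y:ℝ))^2 := by rw [hy]
  rw [sqD_sq (by linarith)] at this
  have : ((D:ℤ):ℝ) = ((y*y : ℤ):ℝ) := by push_cast; nlinarith
  exact_mod_cast this

lemma surd_irr {D P Q : ℤ} (hD : 5 ≤ D) (hns : ¬ IsSquare D) (hQ : Q ≠ 0) :
    Irrational (((P:ℝ) + sqD D)/Q) := by
  exact ((sqD_irr hD hns).intCast_add P).div_intCast hQ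
lemma red_step {D : ℤ} (hD : 5 ≤ D) (hns : ¬ IsSquare D) {P Q : ℤ} (h : IsRed D P Q) :
    ∃ P' Q' : ℤ, IsRed D P' Q' ∧
      Int.fract (((P:ℝ) + sqD D)/Q) * (((P':ℝ) + sqD D)/Q') = 1 := by
  obtain ⟨hQ1, hdvd, hPt, htPQ, hQPt⟩ := h
  set t := sqD D with ht_def
  have ht2 : t^2 = (D:ℝ) := sqD_sq (by linarith)
  have ht : 2 < t := sqD_gt2 hD
  have hQR : (0:ℝ) < Q := by exact_mod_cast hQ1
  set s : ℝ := ((P:ℝ) + t)/Q with hs_def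
  have hs1 : 1 < s := by rw [hs_def, lt_div_iff₀ hQR]; linarith
  have hsirr : Irrational s := surd_irr hD hns (by omega)
  set a : ℤ := ⌊s⌋ with ha_def
  have ha1 : 1 ≤ a := by
    rw [ha_def, Int.le_floor]; exact_mod_cast hs1.le
  set f : ℝ := Int.fract s with hf_def
  have hf0 : 0 < f := by
    rcases lt_or_eq_of_le (Int.fract_nonneg s) with h | h
    · exact h
    · exfalso
      have : s = (⌊s⌋ : ℝ) := by
        have := Int.fract_add_floor s
        rw [← h] at this; linarith
      exact (hsirr.ne_int ⌊s⌋) this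
  have hf1 : f < 1 := Int.fract_lt_one s
  have hfs : f = s - a := by rw [hf_def, ha_def, Int.self_sub_floor s]
  set P' : ℤ := a*Q - P with hP'_def
  have hdvd' : Q ∣ D - P'^2 := by
    have hrw : D - P'^2 = (D - P^2) - Q*(a^2*Q - 2*a*P) := by rw [hP'_def]; ring
    rw [hrw]
    exact dvd_sub hdvd (Dvd.intro _ rfl)
  set Q' : ℤ := (D - P'^2)/Q with hQ'_def
  have hQQ'int : Q * Q' = D - P'^2 := Int.mul_ediv_cancel' hdvd'
  have hQQ' : (Q:ℝ) * (Q':ℝ) = t^2 - (P':ℝ)^2 := by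
    rw [ht2]; exact_mod_cast congrArg (fun z : ℤ => (z:ℝ)) hQQ'int
  have hE1 : (Q:ℝ) * f = t - (P':ℝ) := by
    rw [hfs, hs_def, hP'_def]; push_cast; field_simp; ring
  have htP' : (0:ℝ) < t - P' := by
    rw [← hE1]; positivity
  have haQ : (Q:ℝ) ≤ (a:ℝ)*Q := by
    have : (1:ℝ) ≤ (a:ℝ) := by exact_mod_cast ha1
    nlinarith
  have htPP' : (Q:ℝ) < t + (P':ℝ) := by
    -- t + P' = t + aQ - P ≥ t + Q - P > Q since t > P
    have : (P':ℝ) = (a:ℝ)*Q - P := by rw [hP'_def]; push_cast; ring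
    nlinarith
  have htP'pos : (0:ℝ) < t + P' := by linarith
  have hQ'R : (0:ℝ) < Q' := by
    nlinarith
  have hQ'1 : 1 ≤ Q' := by exact_mod_cast hQ'R
  have hQ'eq : (Q':ℝ) = f * (t + P') := by
    have h1 : (Q:ℝ) * (Q':ℝ) = (Q * f) * (t + P') := by
      rw [hE1]; nlinarith [hQQ']
    have := mul_left_cancel₀ (ne_of_gt hQR) (by linarith [h1] : (Q:ℝ) * Q' = Q * (f * (t + P')))
    exact this
  have hdvd'' : Q' ∣ D - P'^2 := ⟨Q, by rw [← hQQ'int]; ring⟩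
  refine ⟨P', Q', ⟨hQ'1, hdvd'', ?_, ?_, ?_⟩, ?_⟩
  · -- P' < t
    linarith
  · -- t - Q' < P'  ⟺  t - P' < Q'
    have : t - (P':ℝ) < Q' := by
      rw [hQ'eq, ← hE1]
      nlinarith
    linarith
  · -- Q' < P' + t
    rw [hQ'eq]; nlinarith
  · -- fract s * ((P' + t)/Q') = 1
    show f * ((↑P' + t) / ↑Q') = 1
    rw [hQ'eq]
    field_simp
    ring
lemma xPlus_eq {p q : ℤ} : xPlus p q = (sqD (p^2+4*q) - p)/2 := by
  have hc : ((p:ℝ)^2 + 4*(q:ℝ)) = (((p^2+4*q : ℤ)):ℝ) := by push_cast; ring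
  rw [xPlus, sqD, hc]

lemma red_base {R : ℝ} {p q : ℤ} (h : (p,q) ∈ OmegaSet R) :
    ∃ P Q : ℤ, IsRed (p^2+4*q) P Q ∧
      Int.fract (xPlus p q) * (((P:ℝ) + sqD (p^2+4*q))/Q) = 1 := by
  have hD : 5 ≤ p^2+4*q := omega_D_ge5 h
  have hns : ¬ IsSquare (p^2+4*q) := by
    have := h.2.2; simpa using this
  set D : ℤ := p^2+4*q with hD_def
  set t : ℝ := sqD D with ht_def
  have ht2 : t^2 = (D:ℝ) := sqD_sq (by linarith)
  have ht : 2 < t := sqD_gt2 hD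
  set n : ℤ := ⌊xPlus p q⌋ with hn_def
  set x : ℝ := Int.fract (xPlus p q) with hx_def
  have hxplus_irr : Irrational (xPlus p q) := by
    rw [xPlus_eq]
    exact (((sqD_irr hD hns).sub_intCast p)).div_intCast (by norm_num)
  have hx_irr : Irrational x := by
    rw [hx_def, Int.fract]
    exact hxplus_irr.sub_intCast _
  set P : ℤ := p + 2*n with hP_def
  set Q : ℤ := 2*(q - p*n - n^2) with hQ_def
  have hfr : x = xPlus p q - (n:ℝ) := by rw [hx_def, hn_def, Int.fract]
  have hx_eq : x = (t - P)/2 := by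
    rw [hfr, xPlus_eq, hP_def]
    push_cast
    ring
  have hx0 : 0 < x := by
    rcases lt_or_eq_of_le (Int.fract_nonneg (xPlus p q)) with h' | h'
    · exact h'
    · exfalso
      apply hx_irr.ne_int 0
      rw [hx_def, ← h']
      norm_num
  have hx1 : x < 1 := Int.fract_lt_one _
  have hE : t - (P:ℝ) = 2*x := by rw [hx_eq]; ring
  have hPt : (P:ℝ) < t := by linarith
  have htP : 0 < t + (P:ℝ) := by linarith
  have h2Q : 2 * Q = D - P^2 := by rw [hQ_def, hP_def, hD_def]; ring
  have h2QR : 2 * (Q:ℝ) = t^2 - (P:ℝ)^2 := by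
    rw [ht2]; exact_mod_cast congrArg (fun z : ℤ => (z:ℝ)) h2Q
  have hQval : (Q:ℝ) = x * (2*t - 2*x) := by nlinarith
  have hQR : (0:ℝ) < Q := by nlinarith
  have hQ1 : 1 ≤ Q := by exact_mod_cast hQR
  refine ⟨P, Q, ⟨hQ1, ⟨2, by omega⟩, hPt, ?_, ?_⟩, ?_⟩
  · -- t - Q < P  ⟺  t - P < Q  ⟺  2x < x(2t-2x) ⟸ 1 < t - x
    nlinarith
  · -- Q < P + t = 2t - 2x
    nlinarith
  · -- x * ((P+t)/Q) = 1
    show x * (((P:ℝ) + t)/Q) = 1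
    have hPtx : (P:ℝ) + t = 2*t - 2*x := by linarith
    have hne1 : x ≠ 0 := ne_of_gt hx0
    have hne2 : 2*t - 2*x ≠ 0 := by nlinarith
    rw [hQval, hPtx]
    field_simp
    exact div_self (by intro h0; apply hne2; linarith)

lemma red_iter {R : ℝ} {p q : ℤ} (h : (p,q) ∈ OmegaSet R) (n : ℕ) :
    ∃ P Q : ℤ, IsRed (p^2+4*q) P Q ∧
      (gaussMap^[n] (Int.fract (xPlus p q))) * (((P:ℝ) + sqD (p^2+4*q))/Q) = 1 := by
  have hD : 5 ≤ p^2+4*q := omega_D_ge5 h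
  have hns : ¬ IsSquare (p^2+4*q) := by have := h.2.2; simpa using this
  induction n with
  | zero => simpa using red_base h
  | succ m ih =>
    obtain ⟨P, Q, hred, heq⟩ := ih
    have hQR : (0:ℝ) < Q := by exact_mod_cast hred.1
    set s : ℝ := ((P:ℝ) + sqD (p^2+4*q))/Q with hs_def
    have hs1 : 1 < s := by
      rw [hs_def, lt_div_iff₀ hQR]
      have := hred.2.2.2.2
      linarith
    have hy : gaussMap^[m] (Int.fract (xPlus p q)) = 1/s := by
      have hs0 : s ≠ 0 := by positivity
      field_simp
      linarith [heq]
    obtain ⟨P', Q', hred', heq'⟩ := red_step hD hns hred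
    refine ⟨P', Q', hred', ?_⟩
    rw [Function.iterate_succ_apply', hy, gaussMap]
    simpa using heq'
attribute [local instance] Classical.propDecidable

lemma point_bound {R : ℝ} (hR : 2 ≤ R) {p q : ℤ} (h : (p,q) ∈ OmegaSet R) :
    (periodSum p q : ℝ) ≤
      ∑ PQ ∈ (Finset.Icc (-⌈4*R⌉) ⌈4*R⌉ ×ˢ Finset.Icc 1 ⌈4*R⌉).filter
        (fun PQ => IsRed (p^2+4*q) PQ.1 PQ.2),
        2 * sqD (p^2+4*q) / PQ.2 := by
  have hD : 5 ≤ p^2+4*q := omega_D_ge5 h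
  set D : ℤ := p^2+4*q with hD_def
  set t : ℝ := sqD D with ht_def
  set B : ℤ := ⌈4*R⌉ with hB_def
  set x : ℝ := Int.fract (xPlus p q) with hx_def
  have ht2 : t^2 = (D:ℝ) := sqD_sq (by linarith)
  have ht : 2 < t := sqD_gt2 hD
  have ht0 : 0 ≤ t := by linarith
  -- the target sum is nonnegative
  have hRHS_nonneg : ∀ PQ ∈ (Finset.Icc (-B) B ×ˢ Finset.Icc 1 B).filter
      (fun PQ => IsRed D PQ.1 PQ.2), (0:ℝ) ≤ 2 * t / PQ.2 := by
    intro PQ hPQ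
    have h1 : 1 ≤ PQ.2 := ((Finset.mem_filter.mp hPQ).2).1
    have h2 : (0:ℝ) < PQ.2 := by exact_mod_cast h1
    positivity
  rcases Nat.eq_zero_or_pos (period p q) with hT0 | hT1
  · rw [periodSum, hT0]
    simp only [Finset.Icc_eq_empty_of_lt (by norm_num : (1:ℕ) > 0), Finset.sum_empty]
    norm_num
    exact Finset.sum_nonneg hRHS_nonneg
  · set T := period p q with hT_def
    have hS_ne : {T' : ℕ | 1 ≤ T' ∧ ∀ i : ℕ, 1 ≤ i →
        cfDigit (i + T') x = cfDigit i x}.Nonempty := by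
      by_contra hc
      rw [Set.not_nonempty_iff_eq_empty] at hc
      have : T = 0 := by rw [hT_def, period, ← hx_def, hc, Nat.sInf_empty]
      omega
    have hTS : 1 ≤ T ∧ ∀ i : ℕ, 1 ≤ i → cfDigit (i + T) x = cfDigit i x := by
      have := Nat.sInf_mem hS_ne
      rw [hT_def, period, ← hx_def]
      exact this
    choose Pf Qf hred heq using fun n => red_iter h n
    have hQpos : ∀ n, (0:ℝ) < Qf n := fun n => by exact_mod_cast (hred n).1
    set s : ℕ → ℝ := fun n => ((Pf n : ℝ) + t)/Qf n with hs_def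
    have hs1 : ∀ n, 1 < s n := by
      intro n
      rw [hs_def, lt_div_iff₀ (hQpos n)]
      have := (hred n).2.2.2.2
      simp only [one_mul]
      linarith
    have hiter : ∀ n, gaussMap^[n] x = 1/(s n) := by
      intro n
      have h0 : s n ≠ 0 := by have := hs1 n; linarith
      have := heq n
      field_simp
      linarith [this]
    have hdig : ∀ i : ℕ, 1 ≤ i → cfDigit i x = ⌊s (i-1)⌋ := by
      intro i hi
      rw [cfDigit, hiter (i-1), one_div_one_div]
    have hdig_le : ∀ i : ℕ, 1 ≤ i → (cfDigit i x : ℝ) ≤ 2*t/(Qf (i-1)) := by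
      intro i hi
      rw [hdig i hi]
      calc ((⌊s (i-1)⌋ : ℤ) : ℝ) ≤ s (i-1) := Int.floor_le _
        _ ≤ 2*t/(Qf (i-1)) := by
            rw [hs_def, div_le_div_iff₀ (hQpos _) (hQpos _)]
            have hPt := (hred (i-1)).2.2.1
            nlinarith [hQpos (i-1)]
    -- distinctness of the surds over one least period
    have hinj_aux : ∀ i j : ℕ, 1 ≤ i → i < j → j ≤ T →
        (Pf (i-1), Qf (i-1)) ≠ (Pf (j-1), Qf (j-1)) := by
      intro i j hi hij hjT hcontra
      have hsij : s (i-1) = s (j-1) := by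
        rw [hs_def]
        simp only
        rw [(Prod.mk.injEq _ _ _ _).mp hcontra |>.1, (Prod.mk.injEq _ _ _ _).mp hcontra |>.2]
      have hGij : gaussMap^[i-1] x = gaussMap^[j-1] x := by
        rw [hiter, hiter, hsij]
      set d := j - i with hd_def
      have hd1 : 1 ≤ d := by omega
      have hshift : ∀ m : ℕ, i ≤ m → cfDigit (m + d) x = cfDigit m x := by
        intro m hm
        rw [cfDigit, cfDigit]
        congr 1
        have e1 : m + d - 1 = (m - i) + (j - 1) := by omega
        have e2 : m - 1 = (m - i) + (i - 1) := by omega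
        rw [e1, e2, Function.iterate_add_apply, Function.iterate_add_apply, hGij]
      have hperiodic : ∀ k : ℕ, 1 ≤ k → ∀ mm : ℕ, cfDigit (k + mm*T) x = cfDigit k x := by
        intro k hk mm
        induction mm with
        | zero => simp
        | succ m' ih =>
          have e : k + (m'+1)*T = (k + m'*T) + T := by ring
          rw [e, hTS.2 (k + m'*T) (by omega), ih]
      have hdS : 1 ≤ d ∧ ∀ k : ℕ, 1 ≤ k → cfDigit (k + d) x = cfDigit k x := by
        refine ⟨hd1, fun k hk => ?_⟩
        have hkiT : i ≤ k + i*T := by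
          have : i ≤ i*T := Nat.le_mul_of_pos_right i hT1
          omega
        calc cfDigit (k + d) x = cfDigit ((k + d) + i*T) x := (hperiodic (k+d) (by omega) i).symm
          _ = cfDigit ((k + i*T) + d) x := by ring_nf
          _ = cfDigit (k + i*T) x := hshift _ hkiT
          _ = cfDigit k x := hperiodic k hk i
      have hle : T ≤ d := by
        rw [hT_def, period, ← hx_def]
        exact Nat.sInf_le hdS
      omega
    have hinj : Set.InjOn (fun i : ℕ => (Pf (i-1), Qf (i-1))) ↑(Finset.Icc 1 T) := by
      intro i hi j hj hij
      simp only [Finset.coe_Icc, Set.mem_Icc] at hi hj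
      rcases lt_trichotomy i j with hlt | heq' | hlt
      · exact absurd hij (hinj_aux i j hi.1 hlt hj.2)
      · exact heq'
      · exact absurd hij.symm (hinj_aux j i hj.1 hlt hi.2)
    -- bounds making pairs land in the box
    have hq_le : (q:ℝ) ≤ R := by
      have h1 := h.1
      simp only at h1
      nlinarith [sq_nonneg ((q:ℝ) - R), sq_nonneg (p:ℝ)]
    have hDle : (D:ℝ) ≤ 4*R^2 := by
      have h1 := h.1
      simp only at h1
      have : (D:ℝ) = (p:ℝ)^2 + 4*q := by rw [hD_def]; push_cast; ring
      nlinarith [sq_nonneg (q:ℝ)]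
    have ht2R : t ≤ 2*R := by nlinarith
    have hBR : 4*R ≤ (B:ℝ) := Int.le_ceil _
    have hmem_box : ∀ n : ℕ, (Pf n, Qf n) ∈
        (Finset.Icc (-B) B ×ˢ Finset.Icc 1 B).filter (fun PQ => IsRed D PQ.1 PQ.2) := by
      intro n
      obtain ⟨hQ1, hdvd, hPt, htPQ, hQPt⟩ := hred n
      rw [Finset.mem_filter, Finset.mem_product, Finset.mem_Icc, Finset.mem_Icc]
      have hQB : Qf n ≤ B := by
        have : (Qf n : ℝ) ≤ (B:ℝ) := by linarith
        exact_mod_cast this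
      have hPB : Pf n ≤ B := by
        have : (Pf n : ℝ) ≤ (B:ℝ) := by linarith
        exact_mod_cast this
      have hPB' : -B ≤ Pf n := by
        have hq := hQpos n
        have : (-B:ℝ) ≤ (Pf n : ℝ) := by linarith
        exact_mod_cast this
      exact ⟨⟨⟨hPB', hPB⟩, ⟨hQ1, hQB⟩⟩, ⟨hQ1, hdvd, hPt, htPQ, hQPt⟩⟩
    -- main chain
    have step1 : (periodSum p q : ℝ) = ∑ i ∈ Finset.Icc 1 T, (cfDigit i x : ℝ) := by
      rw [periodSum, ← hT_def, ← hx_def]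
      push_cast
      rfl
    rw [step1]
    calc ∑ i ∈ Finset.Icc 1 T, (cfDigit i x : ℝ)
        ≤ ∑ i ∈ Finset.Icc 1 T, 2*t/(Qf (i-1)) := by
          apply Finset.sum_le_sum
          intro i hi
          exact hdig_le i (Finset.mem_Icc.mp hi).1
      _ = ∑ b ∈ (Finset.Icc 1 T).image (fun i => (Pf (i-1), Qf (i-1))), 2*t/b.2 := by
          rw [Finset.sum_image (fun x hx y hy hxy => hinj hx hy hxy)]
      _ ≤ ∑ PQ ∈ (Finset.Icc (-B) B ×ˢ Finset.Icc 1 B).filter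
            (fun PQ => IsRed D PQ.1 PQ.2), 2 * t / PQ.2 := by
          apply Finset.sum_le_sum_of_subset_of_nonneg
          · intro b hb
            obtain ⟨i, hi, rfl⟩ := Finset.mem_image.mp hb
            exact hmem_box (i-1)
          · intro PQ hPQ _
            exact hRHS_nonneg PQ hPQ
lemma count_bound {K B p Q : ℤ} (hQ : 1 ≤ Q) (hK : 0 ≤ K) :
    (((Finset.Icc (-K) K ×ˢ Finset.Icc (-B) B).filter
      (fun qP : ℤ×ℤ => IsRed (p^2+4*qP.1) qP.2 Q)).card : ℤ) ≤ 8*K + 2*Q := by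
  have hQ0 : (0:ℤ) < Q := hQ
  set M : ℤ := (8*K + Q - 1)/Q with hM_def
  have hM0 : 0 ≤ M := Int.ediv_nonneg (by linarith) (by linarith)
  have hQM : M * Q ≤ 8*K + Q - 1 := (Int.le_ediv_iff_mul_le hQ0).mp (le_refl M)
  set tgt : Finset (ℤ × ℤ) := Finset.Icc 0 (Q-1) ×ˢ Finset.Icc 0 M with htgt_def
  have hcard_tgt : (tgt.card : ℤ) ≤ 8*K + 2*Q := by
    rw [htgt_def, Finset.card_product, Int.card_Icc, Int.card_Icc]
    have e1 : ((Q - 1 + 1 - 0).toNat : ℤ) = Q := by omega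
    have e2 : ((M + 1 - 0).toNat : ℤ) = M + 1 := by omega
    push_cast
    rw [e1, e2]
    nlinarith
  have hmain : (((Finset.Icc (-K) K ×ˢ Finset.Icc (-B) B).filter
      (fun qP : ℤ×ℤ => IsRed (p^2+4*qP.1) qP.2 Q)).card : ℤ) ≤ (tgt.card : ℤ) := by
    have hcc := Finset.card_le_card_of_injOn
      (f := fun qP : ℤ×ℤ => (qP.2 % Q,
        (4*qP.1 + p^2 - (qP.2 % Q)^2)/Q - (p^2 - (qP.2 % Q)^2 - 4*K)/Q))
      (s := (Finset.Icc (-K) K ×ˢ Finset.Icc (-B) B).filter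
        (fun qP : ℤ×ℤ => IsRed (p^2+4*qP.1) qP.2 Q))
      (t := tgt) ?_ ?_
    · exact_mod_cast hcc
    · -- maps into target
      rintro ⟨q', P⟩ hqP
      obtain ⟨hbox, hred⟩ := Finset.mem_filter.mp hqP
      obtain ⟨hq'mem, -⟩ := Finset.mem_product.mp hbox
      rw [Finset.mem_Icc] at hq'mem
      obtain ⟨hqlo, hqhi⟩ := hq'mem
      show (P % Q, (4*q' + p^2 - (P % Q)^2)/Q - (p^2 - (P % Q)^2 - 4*K)/Q) ∈ tgt
      have hr0 : 0 ≤ P % Q := Int.emod_nonneg P (by linarith)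
      have hrQ : P % Q < Q := Int.emod_lt_of_pos P hQ0
      have hdvd_w : Q ∣ 4*q' + p^2 - (P % Q)^2 := by
        have hdvd_Pr : Q ∣ P - P % Q := ⟨P / Q, by rw [Int.emod_def]; ring⟩
        have hrw : 4*q' + p^2 - (P % Q)^2
            = ((p^2+4*q') - P^2) + (P - P % Q)*(P + P % Q) := by ring
        rw [hrw]
        exact dvd_add hred.2.1 (hdvd_Pr.mul_right _)
      have hQm : Q * ((4*q' + p^2 - (P % Q)^2)/Q) = 4*q' + p^2 - (P % Q)^2 :=
        Int.mul_ediv_cancel' hdvd_w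
      have hlo1 := Int.emod_add_mul_ediv (p^2 - (P % Q)^2 - 4*K) Q
      have hlo2 : 0 ≤ (p^2 - (P % Q)^2 - 4*K) % Q := Int.emod_nonneg _ (by linarith)
      have hlo3 : (p^2 - (P % Q)^2 - 4*K) % Q < Q := Int.emod_lt_of_pos _ hQ0
      have hlo_le : (p^2 - (P % Q)^2 - 4*K)/Q ≤ (4*q' + p^2 - (P % Q)^2)/Q :=
        Int.ediv_le_ediv hQ0 (by linarith)
      rw [htgt_def, Finset.mem_product, Finset.mem_Icc, Finset.mem_Icc]
      dsimp only
      refine ⟨⟨hr0, by linarith⟩, ⟨by linarith, ?_⟩⟩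
      rw [hM_def]
      rw [Int.le_ediv_iff_mul_le hQ0]
      have hring : ((4*q' + p^2 - (P % Q)^2)/Q - (p^2 - (P % Q)^2 - 4*K)/Q) * Q
          = Q * ((4*q' + p^2 - (P % Q)^2)/Q) - Q * ((p^2 - (P % Q)^2 - 4*K)/Q) := by ring
      rw [hring]
      linarith
    · -- injectivity
      rintro ⟨q₁, P₁⟩ h₁ ⟨q₂, P₂⟩ h₂ heq'
      obtain ⟨hbox₁, hred₁⟩ := Finset.mem_filter.mp h₁
      obtain ⟨hbox₂, hred₂⟩ := Finset.mem_filter.mp h₂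
      simp only [Prod.mk.injEq] at heq'
      obtain ⟨hre, hme⟩ := heq'
      have hdvd_w1 : Q ∣ 4*q₁ + p^2 - (P₁ % Q)^2 := by
        have hdvd_Pr : Q ∣ P₁ - P₁ % Q := ⟨P₁ / Q, by rw [Int.emod_def]; ring⟩
        have hrw : 4*q₁ + p^2 - (P₁ % Q)^2
            = ((p^2+4*q₁) - P₁^2) + (P₁ - P₁ % Q)*(P₁ + P₁ % Q) := by ring
        rw [hrw]
        exact dvd_add hred₁.2.1 (hdvd_Pr.mul_right _)
      have hdvd_w2 : Q ∣ 4*q₂ + p^2 - (P₂ % Q)^2 := by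
        have hdvd_Pr : Q ∣ P₂ - P₂ % Q := ⟨P₂ / Q, by rw [Int.emod_def]; ring⟩
        have hrw : 4*q₂ + p^2 - (P₂ % Q)^2
            = ((p^2+4*q₂) - P₂^2) + (P₂ - P₂ % Q)*(P₂ + P₂ % Q) := by ring
        rw [hrw]
        exact dvd_add hred₂.2.1 (hdvd_Pr.mul_right _)
      have e1 := Int.mul_ediv_cancel' hdvd_w1
      have e2 := Int.mul_ediv_cancel' hdvd_w2
      rw [hre] at e1 hme
      have hm_eq : (4*q₁ + p^2 - (P₂ % Q)^2)/Q = (4*q₂ + p^2 - (P₂ % Q)^2)/Q := by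
        linarith
      rw [hm_eq] at e1
      have hq_eq : q₁ = q₂ := by linarith
      have hD_eq : p^2 + 4*q₁ = p^2 + 4*q₂ := by linarith
      have hP_eq : P₁ = P₂ := by
        have hdvd12 : Q ∣ P₂ - P₁ := Int.ModEq.dvd hre
        have ha := hred₁.2.2.2.1
        have hb := hred₁.2.2.1
        have hc := hred₂.2.2.2.1
        have hd := hred₂.2.2.1
        simp only at ha hb hc hd
        rw [hD_eq] at ha hb
        have habs : |P₂ - P₁| < Q := by
          rw [abs_lt]
          constructor
          · exact_mod_cast (show (-(Q:ℝ)) < ((P₂ - P₁ : ℤ) : ℝ) by push_cast; linarith)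
          · exact_mod_cast (show ((P₂ - P₁ : ℤ) : ℝ) < (Q:ℝ) by push_cast; linarith)
        have := Int.eq_zero_of_abs_lt_dvd hdvd12 habs
        linarith
      rw [Prod.mk.injEq]
      exact ⟨hq_eq, hP_eq⟩
  linarith
lemma sum_inv_Icc_eq_harmonic (n : ℕ) :
    ∑ Q ∈ Finset.Icc (1:ℤ) (n:ℤ), (1:ℝ)/(Q:ℝ) = (harmonic n : ℝ) := by
  induction n with
  | zero => simp [harmonic]
  | succ m ih =>
    have hins : Finset.Icc (1:ℤ) ((m:ℤ)+1) = insert ((m:ℤ)+1) (Finset.Icc (1:ℤ) (m:ℤ)) := by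
      ext z
      simp only [Finset.mem_Icc, Finset.mem_insert]
      omega
    rw [show ((m+1 : ℕ):ℤ) = (m:ℤ)+1 by push_cast; ring, hins,
      Finset.sum_insert (by simp [Finset.mem_Icc]), ih, harmonic_succ]
    push_cast
    ring
lemma sum_inv_Icc_le {B : ℤ} (hB : 1 ≤ B) :
    ∑ Q ∈ Finset.Icc (1:ℤ) B, (1:ℝ)/(Q:ℝ) ≤ 1 + Real.log B := by
  have hBn : B = (B.toNat : ℤ) := by omega
  have h1 : (1:ℕ) ≤ B.toNat := by omega
  rw [hBn, sum_inv_Icc_eq_harmonic]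
  have := harmonic_le_one_add_log B.toNat
  have hcast : ((B.toNat : ℕ) : ℝ) = ((B.toNat : ℤ) : ℝ) := by push_cast; ring
  rw [hcast] at this
  exact this
lemma sqD_le_2R {R : ℝ} (hR : 2 ≤ R) {p q : ℤ} (h : (p,q) ∈ OmegaSet R) :
    sqD (p^2+4*q) ≤ 2*R := by
  have hD : 5 ≤ p^2+4*q := omega_D_ge5 h
  have ht2 : (sqD (p^2+4*q))^2 = ((p^2+4*q : ℤ):ℝ) := sqD_sq (by linarith)
  have ht0 : 0 ≤ sqD (p^2+4*q) := Real.sqrt_nonneg _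
  have h1 := h.1
  simp only at h1
  have hq_le : (q:ℝ) ≤ R := by nlinarith [sq_nonneg ((q:ℝ) - R), sq_nonneg (p:ℝ)]
  have hDle : ((p^2+4*q : ℤ):ℝ) ≤ 4*R^2 := by
    have : ((p^2+4*q : ℤ):ℝ) = (p:ℝ)^2 + 4*q := by push_cast; ring
    nlinarith [sq_nonneg (q:ℝ)]
  nlinarith

set_option maxHeartbeats 1000000 in
/-- Bound for the numerator of `A'_R` from the proof of Theorem 2:
`Σ_{(p,q)∈Ω_R} Σ_{i=1}^{T(p,q)} a_i(frac (x₊(p,q))) ≤ C R³ (ln R)³` for all `R ≥ 2`. -/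
theorem arnold_numerator_bound :
    ∃ C > (0 : ℝ), ∀ R : ℝ, 2 ≤ R →
      (∑ᶠ pq ∈ OmegaSet R, (periodSum pq.1 pq.2 : ℝ)) ≤ C * R ^ 3 * Real.log R ^ 3 := by
  refine ⟨10000, by norm_num, ?_⟩
  intro R hR
  have hR0 : (0:ℝ) < R := by linarith
  set K : ℤ := ⌈R⌉ with hK_def
  set B : ℤ := ⌈4*R⌉ with hB_def
  have hKR : R ≤ (K:ℝ) := Int.le_ceil R
  have hKR' : (K:ℝ) ≤ R + 1 := by
    have := Int.ceil_lt_add_one R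
    linarith
  have hK1 : 1 ≤ K := by
    have : (1:ℝ) ≤ (K:ℝ) := by linarith
    exact_mod_cast this
  have hBR : 4*R ≤ (B:ℝ) := Int.le_ceil _
  have hBR' : (B:ℝ) ≤ 4*R + 1 := by
    have := Int.ceil_lt_add_one (4*R)
    linarith
  have hB1 : 1 ≤ B := by
    have : (1:ℝ) ≤ (B:ℝ) := by linarith
    exact_mod_cast this
  set Pbox : Finset (ℤ × ℤ) := Finset.Icc (-K) K ×ˢ Finset.Icc (-K) K with hPbox_def
  set Ofs : Finset (ℤ × ℤ) := Pbox.filter (fun pq => pq ∈ OmegaSet R) with hOfs_def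
  -- step 0 : the finsum is a finset sum
  have hset : OmegaSet R = ↑Ofs := by
    ext pq
    rw [hOfs_def, Finset.coe_filter]
    simp only [Set.mem_setOf_eq]
    constructor
    · intro hmem
      refine ⟨?_, hmem⟩
      have h1 := hmem.1
      rw [hPbox_def, Finset.mem_product, Finset.mem_Icc, Finset.mem_Icc]
      have hp : (pq.1 : ℝ) ≤ R ∧ -(R:ℝ) ≤ pq.1 := by
        constructor <;> nlinarith [sq_nonneg ((pq.1:ℝ) - R), sq_nonneg ((pq.1:ℝ) + R),
          sq_nonneg (pq.2:ℝ)]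
      have hq : (pq.2 : ℝ) ≤ R ∧ -(R:ℝ) ≤ pq.2 := by
        constructor <;> nlinarith [sq_nonneg ((pq.2:ℝ) - R), sq_nonneg ((pq.2:ℝ) + R),
          sq_nonneg (pq.1:ℝ)]
      constructor
      · constructor
        · exact_mod_cast (show (-(K:ℝ)) ≤ pq.1 by linarith [hp.2])
        · exact_mod_cast (show ((pq.1:ℝ)) ≤ K by linarith [hp.1])
      · constructor
        · exact_mod_cast (show (-(K:ℝ)) ≤ pq.2 by linarith [hq.2])
        · exact_mod_cast (show ((pq.2:ℝ)) ≤ K by linarith [hq.1])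
    · exact fun h => h.2
  rw [hset, finsum_mem_coe_finset]
  -- step 1 : pointwise bound via reduced surds
  have step1 : ∑ pq ∈ Ofs, (periodSum pq.1 pq.2 : ℝ) ≤
      ∑ pq ∈ Ofs, ∑ PQ ∈ (Finset.Icc (-B) B ×ˢ Finset.Icc 1 B).filter
        (fun PQ => IsRed (pq.1^2+4*pq.2) PQ.1 PQ.2), 4*R/PQ.2 := by
    apply Finset.sum_le_sum
    intro pq hpq
    have hmem : (pq.1, pq.2) ∈ OmegaSet R := by
      have := (Finset.mem_filter.mp hpq).2
      simpa using this
    calc (periodSum pq.1 pq.2 : ℝ)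
        ≤ ∑ PQ ∈ (Finset.Icc (-B) B ×ˢ Finset.Icc 1 B).filter
            (fun PQ => IsRed (pq.1^2+4*pq.2) PQ.1 PQ.2), 2 * sqD (pq.1^2+4*pq.2) / PQ.2 :=
          point_bound hR hmem
      _ ≤ ∑ PQ ∈ (Finset.Icc (-B) B ×ˢ Finset.Icc 1 B).filter
            (fun PQ => IsRed (pq.1^2+4*pq.2) PQ.1 PQ.2), 4*R/PQ.2 := by
          apply Finset.sum_le_sum
          intro PQ hPQ
          have hQ1 : 1 ≤ PQ.2 := ((Finset.mem_filter.mp hPQ).2).1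
          have hQpos : (0:ℝ) < PQ.2 := by exact_mod_cast hQ1
          have hle := sqD_le_2R hR hmem
          exact (div_le_div_iff_of_pos_right hQpos).mpr (by linarith)
  -- step 2 : extend to the full box with indicators
  have step2 : ∑ pq ∈ Ofs, ∑ PQ ∈ (Finset.Icc (-B) B ×ˢ Finset.Icc 1 B).filter
        (fun PQ => IsRed (pq.1^2+4*pq.2) PQ.1 PQ.2), 4*R/PQ.2 ≤
      ∑ pq ∈ Pbox, ∑ PQ ∈ Finset.Icc (-B) B ×ˢ Finset.Icc 1 B,
        (if IsRed (pq.1^2+4*pq.2) PQ.1 PQ.2 then 4*R/PQ.2 else 0) := by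
    rw [hOfs_def, Finset.sum_filter]
    apply Finset.sum_le_sum
    intro pq _
    split_ifs with hmem
    · rw [Finset.sum_filter]
    · apply Finset.sum_nonneg
      intro PQ hPQ
      split_ifs with hred
      · have hQ1 : 1 ≤ PQ.2 := hred.1
        have hQpos : (0:ℝ) < PQ.2 := by exact_mod_cast hQ1
        positivity
      · exact le_refl 0
  -- step 3 : rearrange, then count pairs (q,P) for fixed (p,Q)
  have step3 : ∑ pq ∈ Pbox, ∑ PQ ∈ Finset.Icc (-B) B ×ˢ Finset.Icc 1 B,
        (if IsRed (pq.1^2+4*pq.2) PQ.1 PQ.2 then 4*R/PQ.2 else 0)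
      ≤ ∑ p ∈ Finset.Icc (-K) K, ∑ Q ∈ Finset.Icc (1:ℤ) B, (4*R/Q) * (8*(K:ℝ)+2*Q) := by
    rw [hPbox_def]
    simp only [Finset.sum_product]
    apply Finset.sum_le_sum
    intro p _
    calc ∑ q ∈ Finset.Icc (-K) K, ∑ P ∈ Finset.Icc (-B) B, ∑ Q ∈ Finset.Icc (1:ℤ) B,
          (if IsRed (p^2+4*q) P Q then 4*R/(Q:ℝ) else 0)
        = ∑ q ∈ Finset.Icc (-K) K, ∑ Q ∈ Finset.Icc (1:ℤ) B, ∑ P ∈ Finset.Icc (-B) B,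
          (if IsRed (p^2+4*q) P Q then 4*R/(Q:ℝ) else 0) :=
          Finset.sum_congr rfl (fun q _ => Finset.sum_comm)
      _ = ∑ Q ∈ Finset.Icc (1:ℤ) B, ∑ q ∈ Finset.Icc (-K) K, ∑ P ∈ Finset.Icc (-B) B,
          (if IsRed (p^2+4*q) P Q then 4*R/(Q:ℝ) else 0) := Finset.sum_comm
      _ ≤ ∑ Q ∈ Finset.Icc (1:ℤ) B, (4*R/Q) * (8*(K:ℝ)+2*Q) := by
          apply Finset.sum_le_sum
          intro Q hQmem
          have hQ1 : 1 ≤ Q := (Finset.mem_Icc.mp hQmem).1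
          have hQpos : (0:ℝ) < Q := by exact_mod_cast hQ1
          have hrw2 : ∑ q ∈ Finset.Icc (-K) K, ∑ P ∈ Finset.Icc (-B) B,
                (if IsRed (p^2+4*q) P Q then 4*R/(Q:ℝ) else 0)
              = ∑ qP ∈ (Finset.Icc (-K) K ×ˢ Finset.Icc (-B) B).filter
                  (fun qP : ℤ×ℤ => IsRed (p^2+4*qP.1) qP.2 Q), 4*R/(Q:ℝ) := by
            rw [Finset.sum_filter]
            exact (Finset.sum_product (s := Finset.Icc (-K) K) (t := Finset.Icc (-B) B)
              (f := fun qP : ℤ×ℤ => if IsRed (p^2+4*qP.1) qP.2 Q then 4*R/(Q:ℝ) else 0)).symm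
          rw [hrw2, Finset.sum_const, nsmul_eq_mul]
          have hcount := count_bound (K := K) (B := B) (p := p) (Q := Q) hQ1 (by omega)
          have hcountR : ((((Finset.Icc (-K) K ×ˢ Finset.Icc (-B) B).filter
              (fun qP : ℤ×ℤ => IsRed (p^2+4*qP.1) qP.2 Q)).card : ℝ)) ≤ 8*(K:ℝ)+2*Q := by
            exact_mod_cast hcount
          have h4RQ : (0:ℝ) ≤ 4*R/Q := by positivity
          calc (((Finset.Icc (-K) K ×ˢ Finset.Icc (-B) B).filter
                (fun qP : ℤ×ℤ => IsRed (p^2+4*qP.1) qP.2 Q)).card : ℝ) * (4*R/(Q:ℝ))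
              ≤ (8*(K:ℝ)+2*Q) * (4*R/Q) := mul_le_mul_of_nonneg_right hcountR h4RQ
            _ = (4*R/Q) * (8*(K:ℝ)+2*Q) := by ring
  -- step 4 : harmonic sum estimate
  have hlogB0 : 0 ≤ Real.log B := Real.log_nonneg (by exact_mod_cast hB1)
  have step4 : ∑ Q ∈ Finset.Icc (1:ℤ) B, (4*R/Q) * (8*(K:ℝ)+2*Q)
      ≤ 32*R*K*(1 + Real.log B) + 8*R*B := by
    have hterm : ∀ Q ∈ Finset.Icc (1:ℤ) B,
        (4*R/Q) * (8*(K:ℝ)+2*Q) = 32*R*(K:ℝ)*(1/Q) + 8*R := by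
      intro Q hQmem
      have hQ1 : 1 ≤ Q := (Finset.mem_Icc.mp hQmem).1
      have hQpos : (0:ℝ) < Q := by exact_mod_cast hQ1
      field_simp
      ring
    rw [Finset.sum_congr rfl hterm, Finset.sum_add_distrib, ← Finset.mul_sum,
      Finset.sum_const, nsmul_eq_mul, Int.card_Icc]
    have hcard : (((B + 1 - 1).toNat : ℕ) : ℝ) ≤ (B:ℝ) := by
      have h1 : ((B + 1 - 1).toNat : ℤ) = B := by omega
      have h2 := congrArg (fun z : ℤ => (z:ℝ)) h1
      push_cast at h2 ⊢
      linarith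
    have hsum := sum_inv_Icc_le hB1
    have hKpos : (0:ℝ) < K := by exact_mod_cast hK1
    have hRK : (0:ℝ) ≤ 32*R*K := by positivity
    have h8R : (0:ℝ) ≤ 8*R := by linarith
    have m1 := mul_le_mul_of_nonneg_left hsum hRK
    have m2 := mul_le_mul_of_nonneg_left hcard h8R
    linarith
  -- step 5 : sum over p is a constant multiple
  have step5 : ∑ p ∈ Finset.Icc (-K) K, ∑ Q ∈ Finset.Icc (1:ℤ) B, (4*R/Q) * (8*(K:ℝ)+2*Q)
      ≤ (2*(K:ℝ)+1) * (32*R*K*(1 + Real.log B) + 8*R*B) := by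
    have hcardK : (((Finset.Icc (-K) K).card : ℕ) : ℝ) = 2*(K:ℝ)+1 := by
      rw [Int.card_Icc]
      have h1 : ((K + 1 - -K).toNat : ℤ) = 2*K+1 := by omega
      have h2 := congrArg (fun z : ℤ => (z:ℝ)) h1
      push_cast at h2 ⊢
      linarith
    calc ∑ p ∈ Finset.Icc (-K) K, ∑ Q ∈ Finset.Icc (1:ℤ) B, (4*R/Q) * (8*(K:ℝ)+2*Q)
        ≤ ∑ _p ∈ Finset.Icc (-K) K, (32*R*(K:ℝ)*(1 + Real.log B) + 8*R*B) :=
          Finset.sum_le_sum (fun p _ => step4)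
      _ = (2*(K:ℝ)+1) * (32*R*K*(1 + Real.log B) + 8*R*B) := by
          rw [Finset.sum_const, nsmul_eq_mul, hcardK]
  -- final numeric estimates
  have hL2 : Real.log 2 ≤ Real.log R := Real.log_le_log (by norm_num) hR
  have hlog2 : (1/2 : ℝ) < Real.log 2 := by
    have := Real.log_two_gt_d9
    linarith
  set L : ℝ := Real.log R with hL_def
  have hL : (1/2 : ℝ) < L := by linarith
  have hL0 : (0:ℝ) < L := by linarith
  have hlogB : Real.log B ≤ 4*L := by
    have hBR4 : (B:ℝ) ≤ R^4 := by
      have h2 : 2*R ≤ R^2 := by nlinarith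
      have h4 : 4*R^2 ≤ R^4 := by nlinarith [sq_nonneg R]
      nlinarith
    have h1 : Real.log B ≤ Real.log (R^4) :=
      Real.log_le_log (by exact_mod_cast hB1) hBR4
    rw [Real.log_pow] at h1
    push_cast at h1
    linarith
  have hKpos : (0:ℝ) < K := by exact_mod_cast hK1
  have hbound : (2*(K:ℝ)+1) * (32*R*K*(1 + Real.log B) + 8*R*B) ≤ 1472*R^3*L := by
    have hA1 : (2*(K:ℝ)+1) ≤ 4*R := by linarith
    have hA2 : 32*R*(K:ℝ) ≤ 48*R^2 := by nlinarith
    have hA3 : 1 + Real.log B ≤ 6*L := by linarith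
    have hA4 : 8*R*(B:ℝ) ≤ 80*R^2*L := by nlinarith
    have hpos1 : (0:ℝ) ≤ 1 + Real.log B := by linarith
    have hm1 : 32*R*(K:ℝ)*(1 + Real.log B) ≤ 48*R^2*(6*L) :=
      mul_le_mul hA2 hA3 hpos1 (by positivity)
    have he1 : 48*R^2*(6*L) = 288*(R^2*L) := by ring
    have he2 : 80*R^2*L = 80*(R^2*L) := by ring
    have hinner : 32*R*(K:ℝ)*(1 + Real.log B) + 8*R*B ≤ 368*(R^2*L) := by linarith
    have hBpos : (0:ℝ) < B := by linarith
    have hinnerpos : (0:ℝ) ≤ 32*R*(K:ℝ)*(1 + Real.log B) + 8*R*B :=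
      add_nonneg (mul_nonneg (by nlinarith) hpos1) (by nlinarith)
    have hm2 : (2*(K:ℝ)+1) * (32*R*K*(1 + Real.log B) + 8*R*B) ≤ (4*R) * (368*(R^2*L)) :=
      mul_le_mul hA1 hinner hinnerpos (by linarith)
    have he3 : (4*R) * (368*(R^2*L)) = 1472*R^3*L := by ring
    linarith
  have hfinal : (1472:ℝ)*R^3*L ≤ 10000*R^3*L^3 := by
    have hL34 : L ≤ 4*L^3 := by nlinarith [sq_nonneg (L - 1/2), sq_nonneg (L + 1/2)]
    have hm := mul_le_mul_of_nonneg_left hL34 (by positivity : (0:ℝ) ≤ 1472*R^3)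
    have he1 : 1472*R^3*(4*L^3) = 5888*(R^3*L^3) := by ring
    have he2 : (10000:ℝ)*R^3*L^3 = 10000*(R^3*L^3) := by ring
    have hpos : (0:ℝ) ≤ R^3*L^3 := by positivity
    have he0 : (1472:ℝ)*R^3*L = 1472*(R^3*L) := by ring
    nlinarith [hm]
  calc ∑ pq ∈ Ofs, (periodSum pq.1 pq.2 : ℝ)
      ≤ ∑ p ∈ Finset.Icc (-K) K, ∑ Q ∈ Finset.Icc (1:ℤ) B, (4*R/Q) * (8*(K:ℝ)+2*Q) :=
        le_trans step1 (le_trans step2 step3)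
    _ ≤ (2*(K:ℝ)+1) * (32*R*K*(1 + Real.log B) + 8*R*B) := step5
    _ ≤ 1472*R^3*L := hbound
    _ ≤ 10000*R^3*L^3 := hfinal
    _ = 10000 * R ^ 3 * Real.log R ^ 3 := by rw [hL_def]
end

section
/- Let p, q be integers and let Q(u,v) = v² + p·u·v − q·u² be the associated binary quadratic form on ℤ². Let e = (u₁,v₁) and f = (u₂,v₂) be integer vectors with u₁·v₂ − u₂·v₁ = ±1 (so that e, f form a basis of the lattice ℤ²). Put a = Q(e), b = Q(f), and h = Q(e+f) − a − b. Then Q(e−f) = a + b − h (so the values Q(e−f), a+b, Q(e+f) form an arithmetic progression with common difference h), and h² − 4·a·b = p² + 4q. (Equation (8): the arithmetic progression rule for superbases, with h²/4 − ab = Δ/4.) -/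
/-- The binary quadratic form `Q(u,v) = v² + p·u·v − q·u²` associated with the
equation `x² + p x = q`. -/
def quadForm (p q u v : ℤ) : ℤ := v ^ 2 + p * u * v - q * u ^ 2

/-- Equation (8), the arithmetic progression rule for superbases: if `e = (u₁,v₁)` and
`f = (u₂,v₂)` form a basis of `ℤ²` (determinant `±1`), `a = Q(e)`, `b = Q(f)` and
`h = Q(e+f) − a − b`, then `Q(e−f) = a + b − h` (so `Q(e−f), a+b, Q(e+f)` is an
arithmetic progression with common difference `h`) and `h² − 4ab = p² + 4q`. -/
theorem arnold_progression_rule (p q u₁ v₁ u₂ v₂ : ℤ)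
    (hdet : u₁ * v₂ - u₂ * v₁ = 1 ∨ u₁ * v₂ - u₂ * v₁ = -1) :
    quadForm p q (u₁ - u₂) (v₁ - v₂) =
        quadForm p q u₁ v₁ + quadForm p q u₂ v₂ -
          (quadForm p q (u₁ + u₂) (v₁ + v₂) - quadForm p q u₁ v₁ - quadForm p q u₂ v₂) ∧
      (quadForm p q (u₁ + u₂) (v₁ + v₂) - quadForm p q u₁ v₁ - quadForm p q u₂ v₂) ^ 2 -
          4 * quadForm p q u₁ v₁ * quadForm p q u₂ v₂ = p ^ 2 + 4 * q := by
  refine ⟨by unfold quadForm; ring, ?_⟩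
  rcases hdet with h | h
  · unfold quadForm
    linear_combination (p ^ 2 + 4 * q) * (u₁ * v₂ - u₂ * v₁ + 1) * h
  · unfold quadForm
    linear_combination (p ^ 2 + 4 * q) * (u₁ * v₂ - u₂ * v₁ - 1) * h
end
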